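/- arXiv:2105.00179 — 6 statements merged into one kernel-verified Lean document; each statement's English description precedes it below -/
import Mathlib

section
/- For every integer n ≥ 3 there exist positive integers c_{ij} (for 1 ≤ j ≤ i ≤ n) with c₁₁ = 1, with c_{ij} = c_{(j+1)j} for all i, j with j < i ≤ n (each subdiagonal column is constant), and with c_{(i+1)i} ≤ 9 for all i ∈ {1, …, n−1}, such that the following holds. Set σ = Σ_{i=1}^{n−1} c_{(i+1)i}². For every real ε with 0 < ε < min{1/σ, min_{1≤i≤n} 1/(2c_{ii}), 1/12} and every function f defined on a set D ⊆ ℝⁿ containing {0, e₁, …, eₙ} with f(0) = 0, satisfying |‖f(x) − f(y)‖ − ‖x − y‖| ≤ ε for all x, y ∈ {0, e₁, …, eₙ}, and whose values on the basis have the triangular form f(eᵢ) = (e′ᵢ₁, …, e′ᵢᵢ, 0, …, 0) with e′ᵢᵢ ≥ 0, one has −c_{ij}·ε ≤ e′ᵢⱼ ≤ c_{ij}·ε for all 1 ≤ j < i ≤ n, and 1 − c_{ii}·ε ≤ e′ᵢᵢ ≤ 1 + ε for all 1 ≤ i ≤ n. -/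
set_option maxHeartbeats 2000000 in
/-- Theorem 3.1 (preliminary theorem): for every `n ≥ 3` there exist positive
integers `c i j` (for `j ≤ i`), with `c₁₁ = 1`, constant subdiagonal columns
(`c i j = c (j+1) j` for `j < i`), and `c (i+1) i ≤ 9`, such that any
`ε`-isometry on `{0, e₁, …, eₙ}` fixing `0` and having triangular form on the
basis satisfies `|e′ᵢⱼ| ≤ cᵢⱼ ε` below the diagonal and
`1 - cᵢᵢ ε ≤ e′ᵢᵢ ≤ 1 + ε` on the diagonal. -/
theorem preliminary_bounds (n : ℕ) (hn : 3 ≤ n) :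
    ∃ c : Fin n → Fin n → ℕ,
      (∀ i j : Fin n, j ≤ i → 0 < c i j) ∧
      c ⟨0, by omega⟩ ⟨0, by omega⟩ = 1 ∧
      (∀ i j : Fin n, j < i → ∀ h : (j : ℕ) + 1 < n, c i j = c ⟨(j : ℕ) + 1, h⟩ j) ∧
      (∀ j : Fin n, ∀ h : (j : ℕ) + 1 < n, c ⟨(j : ℕ) + 1, h⟩ j ≤ 9) ∧
      ∀ ε : ℝ, 0 < ε →
        ε < 1 / (∑ j : Fin (n - 1),
          ((c ⟨(j : ℕ) + 1, by have := j.isLt; omega⟩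
              ⟨(j : ℕ), by have := j.isLt; omega⟩ : ℕ) : ℝ) ^ 2) →
        (∀ i : Fin n, ε < 1 / (2 * (c i i : ℝ))) →
        ε < 1 / 12 →
        ∀ D : Set (EuclideanSpace ℝ (Fin n)),
          (0 : EuclideanSpace ℝ (Fin n)) ∈ D →
          (∀ i : Fin n, EuclideanSpace.single i (1 : ℝ) ∈ D) →
          ∀ f : EuclideanSpace ℝ (Fin n) → EuclideanSpace ℝ (Fin n),
            f 0 = 0 →
            (∀ x ∈ insert (0 : EuclideanSpace ℝ (Fin n))
                (Set.range fun i : Fin n => EuclideanSpace.single i (1 : ℝ)),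
             ∀ y ∈ insert (0 : EuclideanSpace ℝ (Fin n))
                (Set.range fun i : Fin n => EuclideanSpace.single i (1 : ℝ)),
              |‖f x - f y‖ - ‖x - y‖| ≤ ε) →
            (∀ i j : Fin n, i < j → f (EuclideanSpace.single i (1 : ℝ)) j = 0) →
            (∀ i : Fin n, 0 ≤ f (EuclideanSpace.single i (1 : ℝ)) i) →
            (∀ i j : Fin n, j < i →
                -((c i j : ℝ) * ε) ≤ f (EuclideanSpace.single i (1 : ℝ)) j ∧
                f (EuclideanSpace.single i (1 : ℝ)) j ≤ (c i j : ℝ) * ε) ∧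
            (∀ i : Fin n,
                1 - (c i i : ℝ) * ε ≤ f (EuclideanSpace.single i (1 : ℝ)) i ∧
                f (EuclideanSpace.single i (1 : ℝ)) i ≤ 1 + ε) := by
  refine ⟨fun i j => if i = j then (if (i : ℕ) = 0 then 1 else 2) else 9,
    ?_, ?_, ?_, ?_, ?_⟩
  · intro i j _
    dsimp only
    split_ifs <;> norm_num
  · simp
  · intro i j hij h
    have h1 : i ≠ j := ne_of_gt hij
    have h2 : (⟨(j : ℕ) + 1, h⟩ : Fin n) ≠ j := by
      simp [Fin.ext_iff]
    simp [h1, h2]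
  · intro j h
    have h2 : (⟨(j : ℕ) + 1, h⟩ : Fin n) ≠ j := by
      simp [Fin.ext_iff]
    simp [h2]
  intro ε hε hε1 _ hε3 D hD0 hDe f hf0 hiso htri hdg
  set g : Fin n → EuclideanSpace ℝ (Fin n) :=
    fun i => f (EuclideanSpace.single i (1 : ℝ)) with hgdef0
  have hgdef : ∀ i, f (EuclideanSpace.single i (1 : ℝ)) = g i := fun _ => rfl
  simp only [hgdef] at htri hdg ⊢
  -- simplify the sigma bound
  norm_num [Fin.mk.injEq, Finset.sum_const, Fintype.card_fin] at hε1
  rw [show ((n - 1 : ℕ) : ℝ) = (n : ℝ) - 1 by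
    push_cast [Nat.cast_sub (by omega : 1 ≤ n)]; ring] at hε1
  have hn1 : (0 : ℝ) < (n : ℝ) - 1 := by
    have h3 : (3 : ℝ) ≤ (n : ℝ) := by exact_mod_cast hn
    linarith
  have hσ : 81 * ((n : ℝ) - 1) * ε < 1 := by
    have h2 : ε * ((n : ℝ) - 1) < 1 / 81 := by
      calc ε * ((n : ℝ) - 1) < (1 / 81 * ((n : ℝ) - 1)⁻¹) * ((n : ℝ) - 1) :=
            mul_lt_mul_of_pos_right hε1 hn1
        _ = 1 / 81 := by field_simp
    linarith
  have h81 : ∀ k : Fin n, 81 * ((k : ℕ) : ℝ) * ε ≤ 1 := by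
    intro k
    have hk : ((k : ℕ) : ℝ) ≤ (n : ℝ) - 1 := by
      have := k.isLt
      have : ((k : ℕ) : ℝ) ≤ (n : ℝ) - 1 := by
        have h' : (k : ℕ) + 1 ≤ n := k.isLt
        have : (((k : ℕ) + 1 : ℕ) : ℝ) ≤ (n : ℝ) := by exact_mod_cast h'
        push_cast at this; linarith
      exact this
    nlinarith
  -- membership facts
  have hmem : ∀ i : Fin n, EuclideanSpace.single i (1 : ℝ) ∈
      insert (0 : EuclideanSpace ℝ (Fin n))
        (Set.range fun i : Fin n => EuclideanSpace.single i (1 : ℝ)) :=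
    fun i => Set.mem_insert_iff.2 (Or.inr ⟨i, rfl⟩)
  have hmem0 : (0 : EuclideanSpace ℝ (Fin n)) ∈
      insert (0 : EuclideanSpace ℝ (Fin n))
        (Set.range fun i : Fin n => EuclideanSpace.single i (1 : ℝ)) :=
    Set.mem_insert _ _
  -- basic norm bounds
  have hnorm : ∀ i : Fin n, |‖g i‖ - 1| ≤ ε := by
    intro i
    have := hiso _ (hmem i) 0 hmem0
    simpa [hf0, hgdef, EuclideanSpace.norm_single] using this
  have hlo : ∀ i : Fin n, 1 - ε ≤ ‖g i‖ := by
    intro i; have := abs_le.1 (hnorm i); linarith [this.1]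
  have hhi : ∀ i : Fin n, ‖g i‖ ≤ 1 + ε := by
    intro i; have := abs_le.1 (hnorm i); linarith [this.2]
  have hs2 : Real.sqrt 2 ^ 2 = 2 := Real.sq_sqrt (by norm_num)
  have hs0 : (0 : ℝ) ≤ Real.sqrt 2 := Real.sqrt_nonneg 2
  have hs1 : (1 : ℝ) ≤ Real.sqrt 2 := by nlinarith
  have hs32 : Real.sqrt 2 ≤ 3 / 2 := by nlinarith
  have hdist : ∀ i k : Fin n, i ≠ k → |‖g i - g k‖ - Real.sqrt 2| ≤ ε := by
    intro i k hik
    have hd : ‖(EuclideanSpace.single i (1 : ℝ)) - EuclideanSpace.single k (1 : ℝ)‖ =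
        Real.sqrt 2 := by
      have h2 : ‖(EuclideanSpace.single i (1 : ℝ)) - EuclideanSpace.single k (1 : ℝ)‖ ^ 2 = 2 := by
        rw [norm_sub_sq_real, EuclideanSpace.inner_single_left]
        simp [EuclideanSpace.single_apply, hik]
        norm_num
      rw [← h2, Real.sqrt_sq (norm_nonneg _)]
    have := hiso _ (hmem i) _ (hmem k)
    rwa [hd, hgdef, hgdef] at this
  have hnsq : ∀ i : Fin n, ∑ j, (g i j) ^ 2 = ‖g i‖ ^ 2 := by
    intro i
    rw [EuclideanSpace.norm_eq, Real.sq_sqrt (by positivity)]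
    simp [Real.norm_eq_abs, sq_abs]
  have hip : ∀ i k : Fin n, (inner ℝ (g i) (g k) : ℝ) = ∑ j, g i j * g k j := by
    intro i k
    simp [PiLp.inner_apply, RCLike.inner_apply, mul_comm]
  have hε2' : ε ^ 2 ≤ ε / 12 := by nlinarith
  have habsI : ∀ x y d s I : ℝ, d ^ 2 = x ^ 2 - 2 * I + y ^ 2 → s ^ 2 = 2 →
      1 ≤ s → s ≤ 3 / 2 → s - ε ≤ d → d ≤ s + ε → 1 - ε ≤ x → x ≤ 1 + ε →
      1 - ε ≤ y → y ≤ 1 + ε → 0 ≤ d → 0 ≤ x → 0 ≤ y → |I| ≤ 43 / 12 * ε := by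
    intro x y d s I hns hs2a hs1a hs32a hd1 hd2 hx1 hx2 hy1 hy2 hd0 hx0 hy0
    have p1 : 0 ≤ (d - (s - ε)) * (d + (s - ε)) :=
      mul_nonneg (by linarith) (by linarith)
    have p2 : 0 ≤ (s + ε - d) * (s + ε + d) :=
      mul_nonneg (by linarith) (by linarith)
    have p3 : 0 ≤ (1 + ε - x) * (1 + ε + x) :=
      mul_nonneg (by linarith) (by linarith)
    have p4 : 0 ≤ (x - (1 - ε)) * (x + (1 - ε)) :=
      mul_nonneg (by linarith) (by linarith)
    have p5 : 0 ≤ (1 + ε - y) * (1 + ε + y) :=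
      mul_nonneg (by linarith) (by linarith)
    have p6 : 0 ≤ (y - (1 - ε)) * (y + (1 - ε)) :=
      mul_nonneg (by linarith) (by linarith)
    have p7 : s * ε ≤ 3 / 2 * ε := mul_le_mul_of_nonneg_right hs32a hε.le
    have p8 : 0 ≤ s * ε := mul_nonneg (by linarith) hε.le
    have q1 : 2 - 2 * (s * ε) + ε ^ 2 ≤ d ^ 2 := by nlinarith [p1, hs2a]
    have q2 : d ^ 2 ≤ 2 + 2 * (s * ε) + ε ^ 2 := by nlinarith [p2, hs2a]
    have q3 : x ^ 2 ≤ 1 + 2 * ε + ε ^ 2 := by nlinarith [p3]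
    have q4 : 1 - 2 * ε + ε ^ 2 ≤ x ^ 2 := by nlinarith [p4]
    have q5 : y ^ 2 ≤ 1 + 2 * ε + ε ^ 2 := by nlinarith [p5]
    have q6 : 1 - 2 * ε + ε ^ 2 ≤ y ^ 2 := by nlinarith [p6]
    rw [abs_le]
    constructor <;> linarith [hε2', hε.le, sq_nonneg ε]
  have hipb : ∀ i k : Fin n, i ≠ k → |∑ j, g i j * g k j| ≤ 43 / 12 * ε := by
    intro i k hik
    rw [← hip]
    have hns : ‖g i - g k‖ ^ 2 = ‖g i‖ ^ 2 - 2 * inner ℝ (g i) (g k) + ‖g k‖ ^ 2 :=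
      norm_sub_sq_real _ _
    have hd := abs_le.1 (hdist i k hik)
    exact habsI _ _ _ _ _ hns hs2 hs1 hs32 (by linarith [hd.1]) (by linarith [hd.2])
      (hlo i) (hhi i) (hlo k) (hhi k) (norm_nonneg _) (norm_nonneg _) (norm_nonneg _)
  -- the main induction
  have key : ∀ m : ℕ, ∀ k : Fin n, (k : ℕ) = m →
      (1 - (if (k : ℕ) = 0 then (1 : ℝ) else 2) * ε ≤ g k k) ∧
      ∀ i : Fin n, k < i → |g i k| ≤ 9 * ε := by
    intro m
    induction m using Nat.strong_induction_on with
    | _ m IH =>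
    intro k hk
    subst hk
    -- sum-over-erase helper
    have hsum_erase : ∀ h : Fin n → ℝ, (∀ j, j < k → h j ≤ 81 * ε ^ 2) →
        (∀ j, k < j → h j ≤ 0) →
        ∑ j ∈ Finset.univ.erase k, h j ≤ 81 * ((k : ℕ) : ℝ) * ε ^ 2 := by
      intro h hb hz
      calc ∑ j ∈ Finset.univ.erase k, h j
          ≤ ∑ j ∈ Finset.univ.erase k, (if j < k then 81 * ε ^ 2 else 0) := by
            apply Finset.sum_le_sum
            intro j hj
            rcases lt_trichotomy j k with h1 | h1 | h1
            · rw [if_pos h1]; exact hb j h1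
            · exact absurd h1 (Finset.ne_of_mem_erase hj)
            · rw [if_neg (not_lt.2 h1.le)]; exact hz j h1
        _ ≤ ∑ j : Fin n, (if j < k then 81 * ε ^ 2 else 0) := by
            apply Finset.sum_le_sum_of_subset_of_nonneg (Finset.erase_subset _ _)
            intro j _ _
            split_ifs <;> positivity
        _ = 81 * ((k : ℕ) : ℝ) * ε ^ 2 := by
            rw [Finset.sum_ite, Finset.sum_const, Finset.sum_const]
            have he : Finset.univ.filter (fun j => j < k) = Finset.Iio k := by
              ext j; simp
            simp [he, Fin.card_Iio]
            ring
    have h81k := h81 k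
    -- diagonal bound
    have hdsum : ∑ j ∈ Finset.univ.erase k, (g k j) ^ 2 ≤ 81 * ((k : ℕ) : ℝ) * ε ^ 2 := by
      apply hsum_erase
      · intro j hjk
        have hIH := (IH (j : ℕ) hjk j rfl).2 k hjk
        calc (g k j) ^ 2 = |g k j| ^ 2 := (sq_abs _).symm
          _ ≤ (9 * ε) ^ 2 := by
              apply pow_le_pow_left₀ (abs_nonneg _) hIH
          _ = 81 * ε ^ 2 := by ring
      · intro j hjk
        rw [htri k j hjk]
        simp
    have hsplit : (g k k) ^ 2 + ∑ j ∈ Finset.univ.erase k, (g k j) ^ 2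
        = ∑ j, (g k j) ^ 2 :=
      Finset.add_sum_erase Finset.univ (fun j => g k j ^ 2) (Finset.mem_univ k)
    have hksq : (1 - ε) ^ 2 - 81 * ((k : ℕ) : ℝ) * ε ^ 2 ≤ (g k k) ^ 2 := by
      have h1 : (1 - ε) ^ 2 ≤ ‖g k‖ ^ 2 := by nlinarith [hlo k, norm_nonneg (g k)]
      rw [← hnsq k, ← hsplit] at h1
      linarith
    have hCk : 1 - (if (k : ℕ) = 0 then (1 : ℝ) else 2) * ε ≤ g k k := by
      have hkk0 := hdg k
      split_ifs with h0
      · -- k = 0 : coefficient 1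
        have hk0 : ((k : ℕ) : ℝ) = 0 := by exact_mod_cast h0
        have : (1 - ε) ^ 2 ≤ (g k k) ^ 2 := by rw [hk0] at hksq; linarith
        have h1e : (0 : ℝ) ≤ 1 - ε := by linarith
        calc 1 - 1 * ε = Real.sqrt ((1 - ε) ^ 2) := by
              rw [Real.sqrt_sq h1e]; ring
          _ ≤ Real.sqrt ((g k k) ^ 2) := Real.sqrt_le_sqrt this
          _ = g k k := Real.sqrt_sq hkk0
      · have hsq : (1 - 2 * ε) ^ 2 ≤ (g k k) ^ 2 := by nlinarith
        have h1e : (0 : ℝ) ≤ 1 - 2 * ε := by linarith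
        calc 1 - 2 * ε = Real.sqrt ((1 - 2 * ε) ^ 2) := by rw [Real.sqrt_sq h1e]
          _ ≤ Real.sqrt ((g k k) ^ 2) := Real.sqrt_le_sqrt hsq
          _ = g k k := Real.sqrt_sq hkk0
    refine ⟨hCk, ?_⟩
    intro i hik
    have hkk56 : (5 : ℝ) / 6 ≤ g k k := by
      have : 1 - 2 * ε ≤ g k k := by
        split_ifs at hCk <;> linarith
      linarith
    have hsum : ∑ j, g i j * g k j
        = g i k * g k k + ∑ j ∈ Finset.univ.erase k, g i j * g k j :=
      (Finset.add_sum_erase Finset.univ (fun j => g i j * g k j) (Finset.mem_univ k)).symm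
    have herase : |∑ j ∈ Finset.univ.erase k, g i j * g k j|
        ≤ 81 * ((k : ℕ) : ℝ) * ε ^ 2 := by
      calc |∑ j ∈ Finset.univ.erase k, g i j * g k j|
          ≤ ∑ j ∈ Finset.univ.erase k, |g i j * g k j| :=
            Finset.abs_sum_le_sum_abs _ _
        _ ≤ 81 * ((k : ℕ) : ℝ) * ε ^ 2 := by
            apply hsum_erase
            · intro j hjk
              have hIHk := (IH (j : ℕ) hjk j rfl).2 k hjk
              have hIHi := (IH (j : ℕ) hjk j rfl).2 i (hjk.trans hik)
              calc |g i j * g k j| = |g i j| * |g k j| := abs_mul _ _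
                _ ≤ (9 * ε) * (9 * ε) :=
                    mul_le_mul hIHi hIHk (abs_nonneg _) (by positivity)
                _ = 81 * ε ^ 2 := by ring
            · intro j hjk
              rw [htri k j hjk]
              simp
    have hib := hipb i k (ne_of_gt hik)
    have hprod : |g i k * g k k| ≤ 43 / 12 * ε + 81 * ((k : ℕ) : ℝ) * ε ^ 2 := by
      have heq : g i k * g k k
          = (∑ j, g i j * g k j) - ∑ j ∈ Finset.univ.erase k, g i j * g k j := by
        rw [hsum]; ring
      rw [heq]
      calc |(∑ j, g i j * g k j) - ∑ j ∈ Finset.univ.erase k, g i j * g k j|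
          ≤ |∑ j, g i j * g k j| + |∑ j ∈ Finset.univ.erase k, g i j * g k j| :=
            abs_sub _ _
        _ ≤ 43 / 12 * ε + 81 * ((k : ℕ) : ℝ) * ε ^ 2 := by
            exact add_le_add hib herase
    have h81e : 81 * ((k : ℕ) : ℝ) * ε ^ 2 ≤ ε := by nlinarith
    have hfinal : |g i k| * (5 / 6) ≤ 43 / 12 * ε + ε := by
      calc |g i k| * (5 / 6) ≤ |g i k| * g k k :=
            mul_le_mul_of_nonneg_left hkk56 (abs_nonneg _)
        _ = |g i k * g k k| := by
            rw [abs_mul, abs_of_nonneg (by linarith : (0:ℝ) ≤ g k k)]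
        _ ≤ 43 / 12 * ε + 81 * ((k : ℕ) : ℝ) * ε ^ 2 := hprod
        _ ≤ 43 / 12 * ε + ε := by linarith
    linarith
  constructor
  · -- below-diagonal bounds
    intro i j hji
    have hij : i ≠ j := ne_of_gt hji
    have h9 := (key (j : ℕ) j rfl).2 i hji
    have habs := abs_le.1 h9
    have hcv : ((if i = j then (if (i : ℕ) = 0 then 1 else 2) else 9 : ℕ) : ℝ) = 9 := by
      rw [if_neg hij]; norm_num
    rw [hcv]
    exact ⟨by linarith [habs.1], by linarith [habs.2]⟩
  · intro i
    constructor
    · have h1 := (key (i : ℕ) i rfl).1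
      simp only [if_true, if_pos rfl]
      split_ifs at h1 ⊢ <;> push_cast <;> linarith
    · -- upper bound
      have hsq : (g i i) ^ 2 ≤ (1 + ε) ^ 2 := by
        have h1 : (g i i) ^ 2 ≤ ∑ j, (g i j) ^ 2 :=
          Finset.single_le_sum (f := fun j => g i j ^ 2) (fun j _ => sq_nonneg _)
            (Finset.mem_univ i)
        rw [hnsq i] at h1
        nlinarith [hhi i, norm_nonneg (g i)]
      calc g i i = Real.sqrt ((g i i) ^ 2) := (Real.sqrt_sq (hdg i)).symm
        _ ≤ Real.sqrt ((1 + ε) ^ 2) := Real.sqrt_le_sqrt hsq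
        _ = 1 + ε := Real.sqrt_sq (by linarith)
end

section
/- For every integer n ≥ 3 and every real d ≥ 1 there exist constants K > 0 and ε₀ > 0 such that: for every ε with 0 < ε < ε₀, every set D with {0, e₁, …, eₙ} ⊆ D ⊆ B_d(0) ⊆ ℝⁿ, and every function f : D → ℝⁿ with f(0) = 0 satisfying |‖f(x) − f(y)‖ − ‖x − y‖| ≤ ε for all x, y ∈ D, there exists an isometry U : D → ℝⁿ with ‖f(x) − U(x)‖ ≤ K·ε for all x ∈ D. -/
open RealInnerProductSpace Finset

variable {E : Type*} [NormedAddCommGroup E] [InnerProductSpace ℝ E]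

/-- Quantitative Gram–Schmidt: an almost-orthonormal family is close to an
orthonormal family, with constant depending only on the number of vectors. -/
lemma almost_orthonormal_close (k : ℕ) :
    ∃ C : ℝ, 1 ≤ C ∧ ∀ η : ℝ, 0 < η → C * η ≤ 1/2 →
      ∀ v : Fin k → E, (∀ i j, |⟪v i, v j⟫ - if i = j then 1 else 0| ≤ η) →
      ∃ w : Fin k → E, Orthonormal ℝ w ∧ ∀ i, ‖v i - w i‖ ≤ C * η := by
  induction k with
  | zero =>
      refine ⟨1, le_refl 1, fun η hη _ v _ => ⟨v, ?_, fun i => i.elim0⟩⟩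
      rw [orthonormal_iff_ite]; exact fun i => i.elim0
  | succ k ih =>
      obtain ⟨C₀, hC₀, H⟩ := ih
      set B : ℝ := 1 + 2 * C₀ with hB
      have hB1 : 1 ≤ B := by simp only [hB]; linarith
      set C : ℝ := C₀ + (2 * (k : ℝ) + 2) * B + 2 with hC
      have hkB : (0 : ℝ) ≤ (k : ℝ) * B := by positivity
      have hCC₀ : C₀ ≤ C := by
        have : (0:ℝ) ≤ (2 * (k : ℝ) + 2) * B := by positivity
        simp only [hC]; linarith
      have hC1 : 1 ≤ C := le_trans hC₀ hCC₀
      have hkBC : (k : ℝ) * B + 1 ≤ C := by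
        have h2 : (k : ℝ) * B ≤ (2 * (k : ℝ) + 2) * B := by nlinarith
        simp only [hC]; linarith
      clear_value B C
      refine ⟨C, hC1, fun η hη hCη v hv => ?_⟩
      have hηhalf : η ≤ 1/2 := le_trans (le_mul_of_one_le_left hη.le hC1) hCη
      have hC₀η : C₀ * η ≤ 1/2 :=
        le_trans (by nlinarith : C₀ * η ≤ C * η) hCη
      -- apply induction hypothesis to the first k vectors
      obtain ⟨w, hw, hwc⟩ := H η hη hC₀η (v ∘ Fin.castSucc) (fun i j => by
        simpa [Fin.castSucc_inj] using hv i.castSucc j.castSucc)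
      -- norm bounds
      have hnorm : ∀ i, |‖v i‖ - 1| ≤ η := by
        intro i
        have h := hv i i
        rw [if_pos rfl, real_inner_self_eq_norm_sq] at h
        rw [abs_le] at h ⊢
        have h0 : (0:ℝ) ≤ ‖v i‖ := norm_nonneg _
        constructor <;> nlinarith [h.1, h.2]
      have hnorm2 : ∀ i, ‖v i‖ ≤ 2 := by
        intro i
        have := hnorm i
        rw [abs_le] at this
        linarith [this.2]
      -- coefficients
      set c : Fin k → ℝ := fun i => ⟪w i, v (Fin.last k)⟫ with hc
      have hcb : ∀ i, |c i| ≤ B * η := by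
        intro i
        have hsplit : c i = ⟪w i - v i.castSucc, v (Fin.last k)⟫
            + ⟪v i.castSucc, v (Fin.last k)⟫ := by
          rw [hc]; simp [inner_sub_left]
        have h1 : |⟪w i - v i.castSucc, v (Fin.last k)⟫| ≤ C₀ * η * 2 := by
          calc |⟪w i - v i.castSucc, v (Fin.last k)⟫|
              ≤ ‖w i - v i.castSucc‖ * ‖v (Fin.last k)‖ := abs_real_inner_le_norm _ _
            _ ≤ C₀ * η * 2 := by
                have := hwc i
                rw [norm_sub_rev] at this
                exact mul_le_mul this (hnorm2 _) (norm_nonneg _) (by positivity)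
        have h2 : |⟪v i.castSucc, v (Fin.last k)⟫| ≤ η := by
          have h := hv i.castSucc (Fin.last k)
          rw [if_neg (Fin.castSucc_lt_last i).ne] at h
          simpa using h
        calc |c i| ≤ |⟪w i - v i.castSucc, v (Fin.last k)⟫|
              + |⟪v i.castSucc, v (Fin.last k)⟫| := by rw [hsplit]; exact abs_add_le _ _
          _ ≤ C₀ * η * 2 + η := add_le_add h1 h2
          _ = B * η := by rw [hB]; ring
      -- the projection
      set p : E := v (Fin.last k) - ∑ i, c i • w i with hp
      have hvp : ‖v (Fin.last k) - p‖ ≤ (k : ℝ) * B * η := by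
        rw [hp, sub_sub_cancel]
        calc ‖∑ i, c i • w i‖ ≤ ∑ i, ‖c i • w i‖ := norm_sum_le _ _
          _ ≤ ∑ _i : Fin k, B * η := by
              refine Finset.sum_le_sum fun i _ => ?_
              rw [norm_smul, hw.1 i, mul_one]
              exact hcb i
          _ = (k : ℝ) * B * η := by simp [mul_assoc]
      have hportho : ∀ i, ⟪w i, p⟫ = 0 := by
        intro i
        rw [hp, inner_sub_right, hw.inner_right_fintype]
        simp [hc]
      have hpnorm : |‖p‖ - 1| ≤ ((k : ℝ) * B + 1) * η := by
        have h1 : |‖p‖ - ‖v (Fin.last k)‖| ≤ (k : ℝ) * B * η := by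
          refine le_trans (abs_norm_sub_norm_le _ _) ?_
          rw [norm_sub_rev]; exact hvp
        have h2 := hnorm (Fin.last k)
        calc |‖p‖ - 1| = |(‖p‖ - ‖v (Fin.last k)‖) + (‖v (Fin.last k)‖ - 1)| := by ring_nf
          _ ≤ |‖p‖ - ‖v (Fin.last k)‖| + |‖v (Fin.last k)‖ - 1| := abs_add_le _ _
          _ ≤ (k : ℝ) * B * η + η := add_le_add h1 h2
          _ = ((k : ℝ) * B + 1) * η := by ring
      have hphalf : (1:ℝ)/2 ≤ ‖p‖ := by
        have h1 : ((k : ℝ) * B + 1) * η ≤ C * η := by nlinarith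
        have h2 : ((k : ℝ) * B + 1) * η ≤ 1/2 := le_trans h1 hCη
        have h := abs_le.mp hpnorm
        linarith [h.1]
      have hppos : 0 < ‖p‖ := lt_of_lt_of_le (by norm_num) hphalf
      set u : E := ‖p‖⁻¹ • p with hu
      have hunorm : ‖u‖ = 1 := by
        rw [hu, norm_smul, norm_inv, norm_norm, inv_mul_cancel₀ hppos.ne']
      have huortho : ∀ i, ⟪w i, u⟫ = 0 := by
        intro i; rw [hu, real_inner_smul_right, hportho, mul_zero]
      have hpu : ‖p - u‖ ≤ ((k : ℝ) * B + 1) * η := by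
        have h4 : p - u = (1 - ‖p‖⁻¹) • p := by rw [hu, sub_smul, one_smul]
        have h5 : (1 - ‖p‖⁻¹) * ‖p‖ = ‖p‖ - 1 := by field_simp
        have h6 : ‖p - u‖ = |‖p‖ - 1| := by
          rw [h4, norm_smul, Real.norm_eq_abs]
          calc |1 - ‖p‖⁻¹| * ‖p‖ = |(1 - ‖p‖⁻¹) * ‖p‖| := by
                rw [abs_mul, abs_of_pos hppos]
            _ = |‖p‖ - 1| := by rw [h5]
        rw [h6]; exact hpnorm
      have hvu : ‖v (Fin.last k) - u‖ ≤ C * η := by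
        calc ‖v (Fin.last k) - u‖ = ‖(v (Fin.last k) - p) + (p - u)‖ := by
              rw [sub_add_sub_cancel]
          _ ≤ ‖v (Fin.last k) - p‖ + ‖p - u‖ := norm_add_le _ _
          _ ≤ (k : ℝ) * B * η + ((k : ℝ) * B + 1) * η := add_le_add hvp hpu
          _ ≤ C * η := by nlinarith
      -- assemble
      refine ⟨Fin.snoc w u, ?_, ?_⟩
      · rw [orthonormal_iff_ite]
        intro i j
        refine Fin.lastCases ?_ ?_ i
        · refine Fin.lastCases ?_ ?_ j
          · simp [real_inner_self_eq_norm_sq, hunorm]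
          · intro b
            rw [Fin.snoc_last, Fin.snoc_castSucc, if_neg (Fin.castSucc_lt_last b).ne',
              real_inner_comm]
            exact huortho b
        · intro a
          refine Fin.lastCases ?_ ?_ j
          · rw [Fin.snoc_castSucc, Fin.snoc_last, if_neg (Fin.castSucc_lt_last a).ne]
            exact huortho a
          · intro b
            have := orthonormal_iff_ite.mp hw a b
            simpa [Fin.snoc_castSucc, Fin.castSucc_inj] using this
      · intro i
        refine Fin.lastCases ?_ ?_ i
        · simpa [Fin.snoc_last] using hvu
        · intro a
          have := hwc a
          simp only [Fin.snoc_castSucc]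
          refine le_trans ?_ (by nlinarith : C₀ * η ≤ C * η)
          simpa using this


open EuclideanSpace Module in
set_option maxHeartbeats 1000000 in
/-- Qualitative form of the main theorem: for every `n ≥ 3` and `d ≥ 1` there
are constants `K > 0` and `ε₀ > 0` such that every `ε`-isometry (`0 < ε < ε₀`)
fixing the origin, defined on a set `D` with `{0, e₁, …, eₙ} ⊆ D ⊆ B_d(0)`,
is within `K ε` of an isometry of `D` into `ℝⁿ`. -/
theorem stability_constant_exists (n : ℕ) (hn : 3 ≤ n) (d : ℝ) (hd : 1 ≤ d) :
    ∃ K > (0 : ℝ), ∃ ε₀ > (0 : ℝ),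
      ∀ ε : ℝ, 0 < ε → ε < ε₀ →
      ∀ D : Set (EuclideanSpace ℝ (Fin n)),
        (0 : EuclideanSpace ℝ (Fin n)) ∈ D →
        (∀ i : Fin n, EuclideanSpace.single i (1 : ℝ) ∈ D) →
        D ⊆ Metric.closedBall 0 d →
        ∀ f : EuclideanSpace ℝ (Fin n) → EuclideanSpace ℝ (Fin n),
          f 0 = 0 →
          (∀ x ∈ D, ∀ y ∈ D, |‖f x - f y‖ - ‖x - y‖| ≤ ε) →
          ∃ U : EuclideanSpace ℝ (Fin n) → EuclideanSpace ℝ (Fin n),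
            (∀ x ∈ D, ∀ y ∈ D, ‖U x - U y‖ = ‖x - y‖) ∧
            ∀ x ∈ D, ‖f x - U x‖ ≤ K * ε := by
  classical
  obtain ⟨C, hC1, hGS⟩ := almost_orthonormal_close (E := EuclideanSpace ℝ (Fin n)) n
  have hCpos : (0:ℝ) < C := lt_of_lt_of_le one_pos hC1
  set C₁ : ℝ := 6 * d + 2 with hC₁def
  have hC₁pos : (0:ℝ) < C₁ := by rw [hC₁def]; linarith
  set M : ℝ := C * C₁ * (d + 1) + C₁ with hMdef
  have hMpos : (0:ℝ) < M := by
    have : (0:ℝ) < C * C₁ * (d + 1) := by positivity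
    rw [hMdef]; linarith
  have hn3 : (3:ℝ) ≤ (n:ℝ) := by exact_mod_cast hn
  have hnpos : (0:ℝ) < (n:ℝ) := by linarith
  refine ⟨(n : ℝ) * M, by positivity, min 1 (1 / (2 * C * C₁)), lt_min one_pos (by positivity), ?_⟩
  intro ε hε hε₀ D hD0 hDe hDball f hf0 hfiso
  have hε1 : ε < 1 := lt_of_lt_of_le hε₀ (min_le_left _ _)
  have hCC₁ε : C * (C₁ * ε) ≤ 1/2 := by
    have h := lt_of_lt_of_le hε₀ (min_le_right _ _)
    have h2 : (0:ℝ) < 2 * C * C₁ := by positivity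
    rw [lt_div_iff₀ h2] at h
    nlinarith
  have hnormD : ∀ x ∈ D, ‖x‖ ≤ d := by
    intro x hx
    have := Metric.mem_closedBall.mp (hDball hx)
    simpa [dist_eq_norm] using this
  have hfx : ∀ x ∈ D, ‖f x‖ ≤ d + 1 := by
    intro x hx
    have h := hfiso x hx 0 hD0
    rw [hf0, sub_zero, sub_zero] at h
    have h2 := (abs_le.mp h).2
    linarith [hnormD x hx]
  have hsq : ∀ x ∈ D, ∀ y ∈ D, |‖f x - f y‖^2 - ‖x - y‖^2| ≤ (4*d+1)*ε := by
    intro x hx y hy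
    have h := abs_le.mp (hfiso x hx y hy)
    have hxy : ‖x - y‖ ≤ 2*d :=
      le_trans (norm_sub_le x y) (by linarith [hnormD x hx, hnormD y hy])
    have ha : ‖f x - f y‖ ≤ 2*d + 1 := by linarith [h.2]
    have h0a : (0:ℝ) ≤ ‖f x - f y‖ := norm_nonneg _
    have h0b : (0:ℝ) ≤ ‖x - y‖ := norm_nonneg _
    rw [abs_le]
    constructor <;> nlinarith [h.1, h.2]
  have hinner : ∀ x ∈ D, ∀ y ∈ D, |⟪f x, f y⟫ - ⟪x, y⟫| ≤ C₁ * ε := by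
    intro x hx y hy
    have hx2 : |‖f x‖^2 - ‖x‖^2| ≤ (4*d+1)*ε := by
      have := hsq x hx 0 hD0
      rwa [hf0, sub_zero, sub_zero] at this
    have hy2 : |‖f y‖^2 - ‖y‖^2| ≤ (4*d+1)*ε := by
      have := hsq y hy 0 hD0
      rwa [hf0, sub_zero, sub_zero] at this
    have hxy2 := hsq x hx y hy
    rw [norm_sub_sq_real, norm_sub_sq_real] at hxy2
    have h1 := abs_le.mp hx2
    have h2 := abs_le.mp hy2
    have h3 := abs_le.mp hxy2
    have key : (3:ℝ) * ((4*d+1)*ε) ≤ 2 * (C₁*ε) := by rw [hC₁def]; nlinarith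
    rw [abs_le]
    constructor <;> linarith [h1.1, h1.2, h2.1, h2.2, h3.1, h3.2, key]
  set v : Fin n → EuclideanSpace ℝ (Fin n) := fun i => f (EuclideanSpace.single i 1) with hvdef
  have hGram : ∀ i j, |⟪v i, v j⟫ - if i = j then 1 else 0| ≤ C₁ * ε := by
    intro i j
    have h := hinner _ (hDe i) _ (hDe j)
    have he : ⟪(EuclideanSpace.single i (1:ℝ)), (EuclideanSpace.single j (1:ℝ))⟫
        = if i = j then (1:ℝ) else 0 := by
      rw [EuclideanSpace.inner_single_left]
      simp [EuclideanSpace.single_apply, eq_comm]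
    rw [he] at h
    exact h
  obtain ⟨w, hw, hwc⟩ := hGS (C₁ * ε) (by positivity) hCC₁ε v hGram
  have hne : Nonempty (Fin n) := ⟨⟨0, by omega⟩⟩
  have hspan : ⊤ ≤ Submodule.span ℝ (Set.range w) :=
    (hw.linearIndependent.span_eq_top_of_card_eq_finrank
      (by simp [finrank_euclideanSpace_fin])).ge
  set b : OrthonormalBasis (Fin n) ℝ (EuclideanSpace ℝ (Fin n)) :=
    OrthonormalBasis.mk hw hspan with hbdef
  have hb : ∀ i, b i = w i := fun i => by rw [hbdef, OrthonormalBasis.coe_mk]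
  clear_value b
  refine ⟨fun x => ∑ i, x i • w i, ?_, ?_⟩
  · intro x _ y _
    have hsub : (∑ i, x i • w i) - (∑ i, y i • w i) = ∑ i, (x i - y i) • w i := by
      rw [← Finset.sum_sub_distrib]
      exact Finset.sum_congr rfl fun i _ => (sub_smul _ _ _).symm
    have hinner2 : ⟪∑ i, (x i - y i) • w i, ∑ i, (x i - y i) • w i⟫
        = ∑ i, (x i - y i) * (x i - y i) := by
      simpa using hw.inner_sum (fun i => x i - y i) (fun i => x i - y i) Finset.univ
    rw [hsub, norm_eq_sqrt_real_inner, hinner2, EuclideanSpace.norm_eq]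
    congr 1
    refine Finset.sum_congr rfl fun i _ => ?_
    have hxy : (x - y) i = x i - y i := rfl
    rw [hxy, Real.norm_eq_abs, sq_abs, sq]
  · intro x hx
    set z : EuclideanSpace ℝ (Fin n) := f x - ∑ i, x i • w i with hzdef
    have hcoord : ∀ i, |⟪w i, z⟫| ≤ M * ε := by
      intro i
      have hsum : ⟪w i, ∑ j, x j • w j⟫ = x i := hw.inner_right_fintype (fun j => x j) i
      have hzi : ⟪w i, z⟫ = ⟪w i - v i, f x⟫ + (⟪v i, f x⟫ - x i) := by
        rw [hzdef, inner_sub_right, hsum, inner_sub_left]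
        ring
      have hb1 : |⟪w i - v i, f x⟫| ≤ C * (C₁ * ε) * (d + 1) := by
        calc |⟪w i - v i, f x⟫| ≤ ‖w i - v i‖ * ‖f x‖ := abs_real_inner_le_norm _ _
          _ ≤ C * (C₁ * ε) * (d + 1) := by
              have h1 := hwc i
              rw [norm_sub_rev] at h1
              exact mul_le_mul h1 (hfx x hx) (norm_nonneg _) (by positivity)
      have hb2 : |⟪v i, f x⟫ - x i| ≤ C₁ * ε := by
        have h := hinner _ (hDe i) x hx
        have he : ⟪(EuclideanSpace.single i (1:ℝ)), x⟫ = x i := by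
          rw [EuclideanSpace.inner_single_left]; simp
        rwa [he] at h
      calc |⟪w i, z⟫| ≤ |⟪w i - v i, f x⟫| + |⟪v i, f x⟫ - x i| := by
            rw [hzi]; exact abs_add_le _ _
        _ ≤ C * (C₁ * ε) * (d + 1) + C₁ * ε := add_le_add hb1 hb2
        _ = M * ε := by rw [hMdef]; ring
    have hz : ‖z‖ ≤ Real.sqrt ((n : ℝ) * (M * ε)^2) := by
      rw [← b.repr.norm_map z, EuclideanSpace.norm_eq]
      apply Real.sqrt_le_sqrt
      calc ∑ i, ‖b.repr z i‖^2 ≤ ∑ _i : Fin n, (M * ε)^2 := by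
            refine Finset.sum_le_sum fun i _ => ?_
            rw [b.repr_apply_apply, hb i, Real.norm_eq_abs]
            exact pow_le_pow_left₀ (abs_nonneg _) (hcoord i) 2
        _ = (n : ℝ) * (M * ε)^2 := by simp [mul_comm]
    have hsqrt : Real.sqrt ((n : ℝ) * (M * ε)^2) ≤ (n : ℝ) * M * ε := by
      have hMε : (0:ℝ) ≤ M * ε := by positivity
      rw [Real.sqrt_mul hnpos.le ((M * ε)^2), Real.sqrt_sq hMε]
      have hsn : Real.sqrt (n : ℝ) ≤ (n : ℝ) := by
        nlinarith [Real.sq_sqrt hnpos.le, Real.sqrt_nonneg ((n:ℝ)), hn3]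
      calc Real.sqrt (n:ℝ) * (M * ε) ≤ (n:ℝ) * (M * ε) :=
            mul_le_mul_of_nonneg_right hsn hMε
        _ = (n:ℝ) * M * ε := by ring
    calc ‖f x - ∑ i, x i • w i‖ = ‖z‖ := by rw [hzdef]
      _ ≤ (n : ℝ) * M * ε := le_trans hz hsqrt
end

section
/- Let n ≥ 3 be an integer, d ≥ 1 a real number, and 0 < ε < 1. Let D be a set with {0, e₁, …, eₙ} ⊆ D ⊆ B_d(0) ⊆ ℝⁿ, and let f : D → ℝⁿ satisfy f(0) = 0 and |‖f(x) − f(y)‖ − ‖x − y‖| ≤ ε for all x, y ∈ D. Assume f has triangular form on the basis, i.e. the j-th coordinate e′ᵢⱼ of f(eᵢ) vanishes for j > i, and suppose there are real numbers c_{ij} ≥ 1 (for 1 ≤ j ≤ i ≤ n) with |e′ᵢⱼ| ≤ c_{ij}·ε for all j < i and 1 − c_{ii}·ε ≤ e′ᵢᵢ ≤ 1 + ε for all i. Then for all x ∈ D, ‖f(x) − x‖ ≤ [ Σ_{i=1}^{n} ( (2 + Σ_{j=1}^{i} c_{ij})·d + 4 + Σ_{j=1}^{i} c_{ij} )² ]^{1/2}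 · ε; in particular the identity map U(x) = x is an isometry within distance [Σ_{i=1}^{n}((2+Σ_{j=1}^{i}c_{ij})d+4+Σ_{j=1}^{i}c_{ij})²]^{1/2}·ε of f. -/
open scoped RealInnerProductSpace

set_option maxHeartbeats 2000000 in
/-- If an `ε`-isometry `f` on `D` (with `{0, e₁, …, eₙ} ⊆ D ⊆ B_d(0)`, `f 0 = 0`)
has triangular form on the basis, with `|e′ᵢⱼ| ≤ cᵢⱼ ε` below the diagonal and
`1 - cᵢᵢ ε ≤ e′ᵢᵢ ≤ 1 + ε` on the diagonal for some constants `cᵢⱼ ≥ 1`, then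
`f` is within `√(Σᵢ ((2 + Σⱼ cᵢⱼ) d + 4 + Σⱼ cᵢⱼ)²) ε` of the identity map on `D`. -/
theorem dist_to_identity (n : ℕ) (hn : 3 ≤ n) (d : ℝ) (hd : 1 ≤ d)
    (ε : ℝ) (hε0 : 0 < ε) (hε1 : ε < 1)
    (D : Set (EuclideanSpace ℝ (Fin n)))
    (h0D : (0 : EuclideanSpace ℝ (Fin n)) ∈ D)
    (heD : ∀ i : Fin n, EuclideanSpace.single i (1 : ℝ) ∈ D)
    (hDd : D ⊆ Metric.closedBall 0 d)
    (f : EuclideanSpace ℝ (Fin n) → EuclideanSpace ℝ (Fin n))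
    (hf0 : f 0 = 0)
    (hiso : ∀ x ∈ D, ∀ y ∈ D, |‖f x - f y‖ - ‖x - y‖| ≤ ε)
    (htri : ∀ i j : Fin n, i < j → f (EuclideanSpace.single i (1 : ℝ)) j = 0)
    (c : Fin n → Fin n → ℝ)
    (hc1 : ∀ i j : Fin n, j ≤ i → 1 ≤ c i j)
    (hcoff : ∀ i j : Fin n, j < i → |f (EuclideanSpace.single i (1 : ℝ)) j| ≤ c i j * ε)
    (hcdiag : ∀ i : Fin n,
      1 - c i i * ε ≤ f (EuclideanSpace.single i (1 : ℝ)) i ∧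
      f (EuclideanSpace.single i (1 : ℝ)) i ≤ 1 + ε) :
    ∀ x ∈ D, ‖f x - x‖ ≤
      Real.sqrt (∑ i : Fin n,
        ((2 + ∑ j ∈ Finset.Iic i, c i j) * d + 4 + ∑ j ∈ Finset.Iic i, c i j) ^ 2) * ε := by
  intro x hx
  set e : Fin n → EuclideanSpace ℝ (Fin n) := fun i => EuclideanSpace.single i (1 : ℝ) with he
  have hxd : ‖x‖ ≤ d := by simpa using hDd hx
  have hfx : |‖f x‖ - ‖x‖| ≤ ε := by simpa [hf0] using hiso x hx 0 h0D
  have hfxd : ‖f x‖ ≤ d + ε := by linarith [(abs_le.1 hfx).2]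
  have hcoordfx : ∀ j : Fin n, |f x j| ≤ d + ε := by
    intro j
    have h1 : |(inner ℝ (f x) (e j) : ℝ)| ≤ ‖f x‖ * ‖e j‖ := abs_real_inner_le_norm _ _
    have h2 : (inner ℝ (f x) (e j) : ℝ) = f x j := by
      rw [show e j = EuclideanSpace.single j (1 : ℝ) from rfl,
        EuclideanSpace.inner_single_right]
      simp
    have h3 : ‖e j‖ = 1 := by simp [he]
    rw [h2, h3, mul_one] at h1
    linarith
  have key : ∀ i : Fin n, |f x i - x i| ≤
      ((2 + ∑ j ∈ Finset.Iic i, c i j) * d + 4 + ∑ j ∈ Finset.Iic i, c i j) * ε := by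
    intro i
    set S := ∑ j ∈ Finset.Iic i, c i j with hS
    have hS1 : 1 ≤ S := by
      refine le_trans (hc1 i i le_rfl) ?_
      refine Finset.single_le_sum (f := fun j => c i j) ?_ (Finset.mem_Iic.2 le_rfl)
      intro j hj
      exact le_trans zero_le_one (hc1 i j (Finset.mem_Iic.1 hj))
    have hS0 : 0 ≤ S := by linarith
    have hei : ‖e i‖ = 1 := by simp [he]
    have hfei : |‖f (e i)‖ - 1| ≤ ε := by
      have := hiso (e i) (heD i) 0 h0D
      simpa [hf0, hei] using this
    have hfeil : ‖f (e i)‖ ≤ 1 + ε := by linarith [(abs_le.1 hfei).2]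
    have hxei : ‖x - e i‖ ≤ d + 1 := by
      calc ‖x - e i‖ ≤ ‖x‖ + ‖e i‖ := norm_sub_le _ _
        _ ≤ d + 1 := by rw [hei]; linarith
    have hA : |‖f x - f (e i)‖ - ‖x - e i‖| ≤ ε := hiso x hx (e i) (heD i)
    have hfxei : ‖f x - f (e i)‖ ≤ d + 1 + ε := by linarith [(abs_le.1 hA).2]
    have hin1 : 2 * (inner ℝ (f x) (f (e i)) : ℝ) = ‖f x‖ ^ 2 + ‖f (e i)‖ ^ 2 - ‖f x - f (e i)‖ ^ 2 := by
      have := norm_sub_sq_real (f x) (f (e i)); linarith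
    have hxinner : (inner ℝ (x) (e i) : ℝ) = x i := by
      rw [show e i = EuclideanSpace.single i (1 : ℝ) from rfl,
        EuclideanSpace.inner_single_right]
      simp
    have hin2 : 2 * x i = ‖x‖ ^ 2 + 1 - ‖x - e i‖ ^ 2 := by
      have h := norm_sub_sq_real x (e i)
      rw [hxinner, hei] at h
      nlinarith
    have hsq1 : |‖f x‖ ^ 2 - ‖x‖ ^ 2| ≤ ε * (2 * d + ε) := by
      have heq : ‖f x‖ ^ 2 - ‖x‖ ^ 2 = (‖f x‖ - ‖x‖) * (‖f x‖ + ‖x‖) := by ring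
      rw [heq, abs_mul]
      have h1 : |‖f x‖ + ‖x‖| ≤ 2 * d + ε := by
        rw [abs_of_nonneg (by positivity)]; linarith
      exact mul_le_mul hfx h1 (abs_nonneg _) hε0.le
    have hsq2 : |‖f (e i)‖ ^ 2 - 1| ≤ ε * (2 + ε) := by
      have heq : ‖f (e i)‖ ^ 2 - 1 = (‖f (e i)‖ - 1) * (‖f (e i)‖ + 1) := by ring
      rw [heq, abs_mul]
      have h1 : |‖f (e i)‖ + 1| ≤ 2 + ε := by
        rw [abs_of_nonneg (by positivity)]; linarith
      exact mul_le_mul hfei h1 (abs_nonneg _) hε0.le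
    have hsq3 : |‖f x - f (e i)‖ ^ 2 - ‖x - e i‖ ^ 2| ≤ ε * (2 * d + 2 + ε) := by
      have heq : ‖f x - f (e i)‖ ^ 2 - ‖x - e i‖ ^ 2 =
          (‖f x - f (e i)‖ - ‖x - e i‖) * (‖f x - f (e i)‖ + ‖x - e i‖) := by ring
      rw [heq, abs_mul]
      have h1 : |‖f x - f (e i)‖ + ‖x - e i‖| ≤ 2 * d + 2 + ε := by
        rw [abs_of_nonneg (by positivity)]; linarith
      exact mul_le_mul hA h1 (abs_nonneg _) hε0.le
    have hinner : |(inner ℝ (f x) (f (e i)) : ℝ) - x i| ≤ (2 * d + 2 + 2 * ε) * ε := by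
      obtain ⟨a1, b1⟩ := abs_le.1 hsq1
      obtain ⟨a2, b2⟩ := abs_le.1 hsq2
      obtain ⟨a3, b3⟩ := abs_le.1 hsq3
      have hq : ε * (2 * d + ε) + ε * (2 + ε) + ε * (2 * d + 2 + ε) ≤
          2 * ((2 * d + 2 + 2 * ε) * ε) := by nlinarith
      rw [abs_le]
      constructor <;> linarith
    have hsum : (inner ℝ (f x) (f (e i)) : ℝ) = ∑ j : Fin n, f x j * f (e i) j := by
      simp [PiLp.inner_apply, RCLike.inner_apply, mul_comm]
    have hdiag : |f (e i) i - 1| ≤ c i i * ε := by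
      obtain ⟨h1, h2⟩ := hcdiag i
      have hc := hc1 i i le_rfl
      rw [abs_le]
      constructor <;> nlinarith
    have hsplit : |(inner ℝ (f x) (f (e i)) : ℝ) - f x i| ≤ (d + ε) * ε * S := by
      rw [hsum]
      have hvan : ∀ j ∈ Finset.univ, j ∉ Finset.Iic i → f x j * f (e i) j = 0 := by
        intro j _ hj
        rw [htri i j (by simpa using hj), mul_zero]
      rw [← Finset.sum_subset (Finset.subset_univ (Finset.Iic i)) hvan]
      have hfxi : f x i = ∑ j ∈ Finset.Iic i, (if j = i then f x i else 0) := by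
        rw [Finset.sum_ite_eq' (Finset.Iic i) i (fun _ => f x i)]
        simp
      rw [hfxi, ← Finset.sum_sub_distrib]
      refine le_trans (Finset.abs_sum_le_sum_abs _ _) ?_
      have : (d + ε) * ε * S = ∑ j ∈ Finset.Iic i, (d + ε) * (c i j * ε) := by
        rw [hS, Finset.mul_sum]; congr 1; ext j; ring
      rw [this]
      refine Finset.sum_le_sum ?_
      intro j hj
      have hji : j ≤ i := Finset.mem_Iic.1 hj
      by_cases hji' : j = i
      · subst hji'
        simp only [if_true, eq_self_iff_true]
        have heq : f x j * f (e j) j - f x j = f x j * (f (e j) j - 1) := by ring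
        rw [heq, abs_mul]
        exact mul_le_mul (hcoordfx j) hdiag (abs_nonneg _) (by linarith [hcoordfx j, abs_nonneg (f x j)])
      · simp only [if_neg hji', sub_zero]
        rw [abs_mul]
        exact mul_le_mul (hcoordfx j) (hcoff i j (lt_of_le_of_ne hji hji'))
          (abs_nonneg _) (by linarith [hcoordfx j, abs_nonneg (f x j)])
    have htr : |f x i - x i| ≤
        |(inner ℝ (f x) (f (e i)) : ℝ) - f x i| + |(inner ℝ (f x) (f (e i)) : ℝ) - x i| := by
      rw [abs_sub_comm ((inner ℝ (f x) (f (e i)) : ℝ)) (f x i)]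
      exact abs_sub_le _ _ _
    have hfin : (d + ε) * ε * S + (2 * d + 2 + 2 * ε) * ε ≤ ((2 + S) * d + 4 + S) * ε := by
      nlinarith [mul_nonneg (mul_nonneg (by linarith : (0:ℝ) ≤ 1 - ε) hε0.le) hS0]
    linarith
  -- assemble
  have hrw : ‖f x - x‖ = Real.sqrt (∑ i : Fin n, |f x i - x i| ^ 2) := by
    rw [EuclideanSpace.norm_eq]
    simp [Real.norm_eq_abs]
  have hrhs : Real.sqrt (∑ i : Fin n,
      (((2 + ∑ j ∈ Finset.Iic i, c i j) * d + 4 + ∑ j ∈ Finset.Iic i, c i j) * ε) ^ 2) =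
      Real.sqrt (∑ i : Fin n,
      ((2 + ∑ j ∈ Finset.Iic i, c i j) * d + 4 + ∑ j ∈ Finset.Iic i, c i j) ^ 2) * ε := by
    simp_rw [mul_pow]
    rw [← Finset.sum_mul, Real.sqrt_mul (by positivity), Real.sqrt_sq hε0.le]
  rw [hrw, ← hrhs]
  refine Real.sqrt_le_sqrt (Finset.sum_le_sum fun i _ => ?_)
  exact pow_le_pow_left₀ (abs_nonneg _) (key i) 2
end

section
/- Let D be a set with {0, e₁, e₂, e₃, e₄} ⊆ D ⊆ {x ∈ ℝ⁴ : ‖x‖ ≤ d} for some real d ≥ 1, and let f : D → ℝ⁴ satisfy f(0) = 0 and |‖f(x) − f(y)‖ − ‖x − y‖| ≤ ε for all x, y ∈ D, where 0 < ε < 1/90. Then there exists an isometry U : D → ℝ⁴ such that ‖f(x) − U(x)‖ ≤ √(1076·d² + 2376·d + 1316) · ε < (33·d + 37)·ε for all x ∈ D. -/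
open scoped RealInnerProductSpace
set_option maxHeartbeats 4000000
noncomputable section

local notation "E4" => EuclideanSpace ℝ (Fin 4)

lemma gs_step {n : ℕ} (ε : ℝ) (hε0 : 0 < ε) (hε : ε ≤ 1/90) (hn3 : n ≤ 3)
    (w : Fin n → E4) (hw : Orthonormal ℝ w)
    (x : E4) (hx : |‖x‖ - 1| ≤ ε) (hxw : ∀ j, |⟪x, w j⟫| ≤ 4.1 * ε) :
    ∃ q : E4, ‖q‖ = 1 ∧ (∀ j, ⟪q, w j⟫ = 0) ∧ ‖q - x‖ ≤ 14 * ε ∧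
      ∀ y : E4, |⟪y, x⟫| ≤ 3.42 * ε → (∀ j, |⟪y, w j⟫| ≤ 4.1 * ε) →
        |⟪y, q⟫| ≤ 4.1 * ε := by
  have hee : ε * ε ≤ ε * (1/90) := mul_le_mul_of_nonneg_left hε hε0.le
  have hite := orthonormal_iff_ite.mp hw
  set p : E4 := x - ∑ j, ⟪x, w j⟫ • w j with hp
  have hpw : ∀ j, ⟪p, w j⟫ = 0 := by
    intro j
    rw [hp, inner_sub_left, sum_inner]
    simp_rw [real_inner_smul_left, hite]
    simp [mul_ite, Finset.sum_ite_eq']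
  have hyp : ∀ y : E4, ⟪y, p⟫ = ⟪y, x⟫ - ∑ j, ⟪x, w j⟫ * ⟪y, w j⟫ := by
    intro y
    rw [hp, inner_sub_right, inner_sum]
    simp_rw [real_inner_smul_right]
  have hps : ‖p‖ ^ 2 = ‖x‖ ^ 2 - ∑ j, ⟪x, w j⟫ ^ 2 := by
    have h1 : ⟪p, p⟫ = ⟪p, x⟫ := by
      rw [hp, inner_sub_right, inner_sum]
      simp_rw [real_inner_smul_right]
      rw [← hp]
      simp [hpw]
    rw [← real_inner_self_eq_norm_sq, ← real_inner_self_eq_norm_sq, h1,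
      ← real_inner_comm p x, hyp x]
    congr 1
    exact Finset.sum_congr rfl fun j _ => (sq _).symm
  have hsum : ∑ j, ⟪x, w j⟫ ^ 2 ≤ 50.43 * ε ^ 2 := by
    calc ∑ j, ⟪x, w j⟫ ^ 2 ≤ ∑ _j : Fin n, (4.1 * ε) ^ 2 := by
          refine Finset.sum_le_sum fun j _ => ?_
          exact sq_abs (⟪x, w j⟫) ▸ pow_le_pow_left₀ (abs_nonneg _) (hxw j) 2
      _ = n * (4.1 * ε) ^ 2 := by simp [mul_comm]
      _ ≤ 3 * (4.1 * ε) ^ 2 := by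
          have : (n : ℝ) ≤ 3 := by exact_mod_cast hn3
          nlinarith [sq_nonneg (4.1 * ε)]
      _ ≤ 50.43 * ε ^ 2 := by nlinarith
  have hsum0 : 0 ≤ ∑ j, ⟪x, w j⟫ ^ 2 := Finset.sum_nonneg fun j _ => sq_nonneg _
  have hxn : 1 - ε ≤ ‖x‖ ∧ ‖x‖ ≤ 1 + ε :=
    (abs_le.mp hx).imp (fun h => by linarith) (fun h => by linarith)
  have hplo : 1 - ε - 26 * ε ^ 2 ≤ ‖p‖ := by
    have hpos : (0:ℝ) < 1 - ε - 26 * ε ^ 2 := by nlinarith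
    have h2 : (1 - ε - 26 * ε ^ 2) ^ 2 ≤ ‖p‖ ^ 2 := by
      rw [hps]; nlinarith [hxn.1, norm_nonneg x]
    nlinarith [norm_nonneg p]
  have hphi : ‖p‖ ≤ 1 + ε := by
    have : ‖p‖ ^ 2 ≤ ‖x‖ ^ 2 := by rw [hps]; linarith
    nlinarith [norm_nonneg p, norm_nonneg x, hxn.2]
  have hp0 : 0 < ‖p‖ := by nlinarith
  refine ⟨‖p‖⁻¹ • p, ?_, ?_, ?_, ?_⟩
  · rw [norm_smul, norm_inv, norm_norm, inv_mul_cancel₀ hp0.ne']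
  · intro j; rw [real_inner_smul_left, hpw j, mul_zero]
  · have h0 : ‖p‖⁻¹ • p - p = (‖p‖⁻¹ - 1) • p := by rw [sub_smul, one_smul]
    have e1 : (‖p‖⁻¹ - 1) * ‖p‖ = 1 - ‖p‖ := by
      rw [sub_mul, inv_mul_cancel₀ hp0.ne', one_mul]
    have h1 : ‖‖p‖⁻¹ • p - p‖ = |1 - ‖p‖| :=
      calc ‖‖p‖⁻¹ • p - p‖ = |‖p‖⁻¹ - 1| * ‖p‖ := by rw [h0, norm_smul, Real.norm_eq_abs]
        _ = |(‖p‖⁻¹ - 1) * ‖p‖| := by rw [abs_mul, abs_of_pos hp0]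
        _ = |1 - ‖p‖| := by rw [e1]
    have h2 : ‖p - x‖ ≤ 12.3 * ε := by
      have h0 : p - x = -(∑ j, ⟪x, w j⟫ • w j) := by rw [hp]; abel
      rw [h0, norm_neg]
      calc ‖∑ j, ⟪x, w j⟫ • w j‖ ≤ ∑ j, ‖⟪x, w j⟫ • w j‖ := norm_sum_le _ _
        _ ≤ ∑ _j : Fin n, 4.1 * ε := by
            refine Finset.sum_le_sum fun j _ => ?_
            rw [norm_smul, Real.norm_eq_abs, hw.1 j, mul_one]
            exact hxw j
        _ = n * (4.1 * ε) := by simp [mul_comm]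
        _ ≤ 12.3 * ε := by
            have : (n : ℝ) ≤ 3 := by exact_mod_cast hn3
            nlinarith
    calc ‖‖p‖⁻¹ • p - x‖ ≤ ‖‖p‖⁻¹ • p - p‖ + ‖p - x‖ := norm_sub_le_norm_sub_add_norm_sub _ _ _
      _ ≤ |1 - ‖p‖| + 12.3 * ε := by rw [h1]; linarith
      _ ≤ 14 * ε := by
          have h5 : |1 - ‖p‖| ≤ ε + 26 * ε ^ 2 :=
            abs_le.mpr ⟨by nlinarith, by nlinarith⟩
          nlinarith
  · intro y hy hyw
    rw [real_inner_smul_right, abs_mul, abs_inv, abs_of_pos hp0]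
    have h1 : |⟪y, p⟫| ≤ 3.42 * ε + 50.43 * ε ^ 2 := by
      rw [hyp y]
      have h2 : |∑ j, ⟪x, w j⟫ * ⟪y, w j⟫| ≤ ∑ j, |⟪x, w j⟫ * ⟪y, w j⟫| :=
        Finset.abs_sum_le_sum_abs _ _
      have h3 : ∑ j, |⟪x, w j⟫ * ⟪y, w j⟫| ≤ ∑ _j : Fin n, (4.1 * ε) * (4.1 * ε) := by
        refine Finset.sum_le_sum fun j _ => ?_
        rw [abs_mul]
        exact mul_le_mul (hxw j) (hyw j) (abs_nonneg _) (by positivity)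
      have h4 : ∑ _j : Fin n, (4.1 * ε) * (4.1 * ε) = n * ((4.1*ε)*(4.1*ε)) := by
        simp [mul_comm]
      have h5 : (n : ℝ) ≤ 3 := by exact_mod_cast hn3
      have h6 : |⟪y, x⟫ - ∑ j, ⟪x, w j⟫ * ⟪y, w j⟫| ≤ |⟪y, x⟫| + |∑ j, ⟪x, w j⟫ * ⟪y, w j⟫| :=
        abs_sub _ _
      nlinarith [sq_nonneg (4.1 * ε)]
    rw [inv_mul_le_iff₀ hp0]
    nlinarith [mul_le_mul_of_nonneg_left hplo (by positivity : (0:ℝ) ≤ 4.1 * ε)]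

lemma gs_four (ε : ℝ) (hε0 : 0 < ε) (hε : ε ≤ 1/90) (v : Fin 4 → E4)
    (hn : ∀ i, |‖v i‖ - 1| ≤ ε)
    (hip : ∀ i j, i ≠ j → |⟪v i, v j⟫| ≤ 3.42 * ε) :
    ∃ u : Fin 4 → E4, Orthonormal ℝ u ∧ ∀ i, ‖u i - v i‖ ≤ 14 * ε := by
  -- step 0
  obtain ⟨q0, hq0n, hq0o, hq0d, hq0y⟩ :=
    gs_step ε hε0 hε (by norm_num) (![] : Fin 0 → E4)
      (⟨fun i => i.elim0, fun i => i.elim0⟩) (v 0) (hn 0) (fun j => j.elim0)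
  have hq0self : ⟪q0, q0⟫ = 1 := by
    rw [real_inner_self_eq_norm_sq, hq0n]; norm_num
  -- step 1
  have hw1 : Orthonormal ℝ ![q0] := by
    refine ⟨fun i => ?_, fun i j hij => ?_⟩
    · fin_cases i; simpa using hq0n
    · exact absurd (Subsingleton.elim i j) hij
  have hv1w : ∀ j : Fin 1, |⟪v 1, ![q0] j⟫| ≤ 4.1 * ε := by
    intro j; fin_cases j
    simpa using hq0y (v 1) (hip 1 0 (by decide)) (fun j => j.elim0)
  obtain ⟨q1, hq1n, hq1o, hq1d, hq1y⟩ :=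
    gs_step ε hε0 hε (by norm_num) ![q0] hw1 (v 1) (hn 1) hv1w
  have hq1q0 : ⟪q1, q0⟫ = 0 := by simpa using hq1o 0
  have hq1self : ⟪q1, q1⟫ = 1 := by
    rw [real_inner_self_eq_norm_sq, hq1n]; norm_num
  -- step 2
  have hw2 : Orthonormal ℝ ![q0, q1] := by
    refine ⟨fun i => ?_, fun i j hij => ?_⟩
    · fin_cases i <;> simp [hq0n, hq1n]
    · have c01 : ⟪q0, q1⟫ = 0 := by rw [real_inner_comm]; exact hq1q0
      fin_cases i <;> fin_cases j <;>
        simp only [Matrix.cons_val_zero, Matrix.cons_val_one, Matrix.head_cons] <;>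
        first
          | exact absurd rfl hij
          | assumption
  have hv2w : ∀ j : Fin 2, |⟪v 2, ![q0, q1] j⟫| ≤ 4.1 * ε := by
    intro j; fin_cases j
    · simpa using hq0y (v 2) (hip 2 0 (by decide)) (fun j => j.elim0)
    · simpa using hq1y (v 2) (hip 2 1 (by decide))
        (fun j => by simpa using hq0y (v 2) (hip 2 0 (by decide)) (fun j => j.elim0))
  obtain ⟨q2, hq2n, hq2o, hq2d, hq2y⟩ :=
    gs_step ε hε0 hε (by norm_num) ![q0, q1] hw2 (v 2) (hn 2) hv2w
  have hq2q0 : ⟪q2, q0⟫ = 0 := by simpa using hq2o 0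
  have hq2q1 : ⟪q2, q1⟫ = 0 := by simpa using hq2o 1
  have hq2self : ⟪q2, q2⟫ = 1 := by
    rw [real_inner_self_eq_norm_sq, hq2n]; norm_num
  -- step 3
  have hw3 : Orthonormal ℝ ![q0, q1, q2] := by
    refine ⟨fun i => ?_, fun i j hij => ?_⟩
    · fin_cases i <;> simp [hq0n, hq1n, hq2n]
    · have c01 : ⟪q0, q1⟫ = 0 := by rw [real_inner_comm]; exact hq1q0
      have c02 : ⟪q0, q2⟫ = 0 := by rw [real_inner_comm]; exact hq2q0
      have c12 : ⟪q1, q2⟫ = 0 := by rw [real_inner_comm]; exact hq2q1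
      fin_cases i <;> fin_cases j <;>
        simp only [Matrix.cons_val_zero, Matrix.cons_val_one, Matrix.head_cons,
          Matrix.cons_val_two, Matrix.tail_cons] <;>
        first
          | exact absurd rfl hij
          | assumption
  have hv3w : ∀ j : Fin 3, |⟪v 3, ![q0, q1, q2] j⟫| ≤ 4.1 * ε := by
    have h30 : |⟪v 3, q0⟫| ≤ 4.1 * ε := by
      simpa using hq0y (v 3) (hip 3 0 (by decide)) (fun j => j.elim0)
    have h31 : |⟪v 3, q1⟫| ≤ 4.1 * ε := by
      simpa using hq1y (v 3) (hip 3 1 (by decide)) (fun j => by simpa using h30)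
    have h32 : |⟪v 3, q2⟫| ≤ 4.1 * ε := by
      refine hq2y (v 3) (hip 3 2 (by decide)) ?_
      intro j; fin_cases j
      · simpa using h30
      · simpa using h31
    intro j; fin_cases j
    · simpa using h30
    · simpa using h31
    · simpa using h32
  obtain ⟨q3, hq3n, hq3o, hq3d, hq3y⟩ :=
    gs_step ε hε0 hε (by norm_num) ![q0, q1, q2] hw3 (v 3) (hn 3) hv3w
  have hq3q0 : ⟪q3, q0⟫ = 0 := by simpa using hq3o 0
  have hq3q1 : ⟪q3, q1⟫ = 0 := by simpa using hq3o 1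
  have hq3q2 : ⟪q3, q2⟫ = 0 := by simpa using hq3o 2
  refine ⟨![q0, q1, q2, q3], ⟨fun i => ?_, fun i j hij => ?_⟩, fun i => ?_⟩
  · fin_cases i <;> simp [hq0n, hq1n, hq2n, hq3n]
  · have c01 : ⟪q0, q1⟫ = 0 := by rw [real_inner_comm]; exact hq1q0
    have c02 : ⟪q0, q2⟫ = 0 := by rw [real_inner_comm]; exact hq2q0
    have c12 : ⟪q1, q2⟫ = 0 := by rw [real_inner_comm]; exact hq2q1
    have c03 : ⟪q0, q3⟫ = 0 := by rw [real_inner_comm]; exact hq3q0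
    have c13 : ⟪q1, q3⟫ = 0 := by rw [real_inner_comm]; exact hq3q1
    have c23 : ⟪q2, q3⟫ = 0 := by rw [real_inner_comm]; exact hq3q2
    fin_cases i <;> fin_cases j <;>
      simp only [Matrix.cons_val_zero, Matrix.cons_val_one, Matrix.head_cons,
        Matrix.cons_val_two, Matrix.tail_cons, Matrix.cons_val_three] <;>
      first
        | exact absurd rfl hij
        | assumption
  · fin_cases i <;>
      simp only [Matrix.cons_val_zero, Matrix.cons_val_one, Matrix.head_cons,
        Matrix.cons_val_two, Matrix.tail_cons, Matrix.cons_val_three] <;>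
      first
        | exact hq0d
        | exact hq1d
        | exact hq2d
        | exact hq3d

/-- Example 5.3: stability of isometries on bounded subsets of `ℝ⁴`. -/
theorem stability_dim_four (d : ℝ) (hd : 1 ≤ d) (ε : ℝ) (hε0 : 0 < ε) (hε : ε < 1 / 90)
    (D : Set (EuclideanSpace ℝ (Fin 4)))
    (h0D : (0 : EuclideanSpace ℝ (Fin 4)) ∈ D)
    (heD : ∀ i : Fin 4, EuclideanSpace.single i (1 : ℝ) ∈ D)
    (hDd : D ⊆ {x : EuclideanSpace ℝ (Fin 4) | ‖x‖ ≤ d})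
    (f : EuclideanSpace ℝ (Fin 4) → EuclideanSpace ℝ (Fin 4))
    (hf0 : f 0 = 0)
    (hiso : ∀ x ∈ D, ∀ y ∈ D, |‖f x - f y‖ - ‖x - y‖| ≤ ε) :
    (∃ U : EuclideanSpace ℝ (Fin 4) → EuclideanSpace ℝ (Fin 4),
      (∀ x ∈ D, ∀ y ∈ D, ‖U x - U y‖ = ‖x - y‖) ∧
      ∀ x ∈ D, ‖f x - U x‖ ≤ Real.sqrt (1076 * d ^ 2 + 2376 * d + 1316) * ε) ∧
    Real.sqrt (1076 * d ^ 2 + 2376 * d + 1316) * ε < (33 * d + 37) * ε := by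
  have hε90 : ε ≤ 1 / 90 := hε.le
  have hee : ε * ε ≤ ε * (1/90) := mul_le_mul_of_nonneg_left hε90 hε0.le
  set e : Fin 4 → E4 := fun i => EuclideanSpace.single i (1 : ℝ) with he
  set v : Fin 4 → E4 := fun i => f (e i) with hv
  -- basic geometry of the unit vectors
  have hen : ∀ i, ‖e i‖ = 1 := by intro i; simp [he]
  have heij : ∀ i j, i ≠ j → ⟪e i, e j⟫ = 0 := by
    intro i j hij
    simp [he, EuclideanSpace.inner_single_left, EuclideanSpace.single_apply,
      Ne.symm hij]
  have hs2 : Real.sqrt 2 ^ 2 = 2 := Real.sq_sqrt (by norm_num)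
  have hsl : (1.414 : ℝ) ≤ Real.sqrt 2 := by nlinarith [Real.sqrt_nonneg 2]
  have hsu : Real.sqrt 2 ≤ 1.41422 := by nlinarith [Real.sqrt_nonneg 2]
  have heije : ∀ i j, i ≠ j → ‖e i - e j‖ = Real.sqrt 2 := by
    intro i j hij
    have hsq : ‖e i - e j‖ ^ 2 = 2 := by
      rw [norm_sub_sq_real, hen i, hen j, heij i j hij]; norm_num
    rw [← Real.sqrt_sq (norm_nonneg (e i - e j)), hsq]
  -- properties of v
  have hi0 : ∀ i, |‖v i‖ - 1| ≤ ε := by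
    intro i
    have h := hiso (e i) (heD i) 0 h0D
    rw [hf0, sub_zero, sub_zero, hen i] at h
    exact h
  have hvn : ∀ i, 1 - ε ≤ ‖v i‖ ∧ ‖v i‖ ≤ 1 + ε := fun i =>
    (abs_le.mp (hi0 i)).imp (fun h => by linarith) (fun h => by linarith)
  have hip : ∀ i j, i ≠ j → |⟪v i, v j⟫| ≤ 3.42 * ε := by
    intro i j hij
    have h := hiso (e i) (heD i) (e j) (heD j)
    rw [heije i j hij] at h
    have h2 := abs_le.mp h
    have h3 := norm_sub_sq_real (v i) (v j)
    have h4 := hvn i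
    have h5 := hvn j
    have h6 : (0:ℝ) ≤ ‖v i - v j‖ := norm_nonneg _
    rw [abs_le]
    constructor <;> nlinarith [sq_nonneg (‖v i - v j‖ - Real.sqrt 2)]
  -- orthonormalization
  obtain ⟨u, hu, hud⟩ := gs_four ε hε0 hε90 v hi0 hip
  have hite := orthonormal_iff_ite.mp hu
  -- orthonormal basis
  have hcard : Fintype.card (Fin 4) = Module.finrank ℝ E4 := by
    simp [finrank_euclideanSpace_fin]
  let b := basisOfOrthonormalOfCardEqFinrank hu hcard
  have hb : ⇑b = u := coe_basisOfOrthonormalOfCardEqFinrank hu hcard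
  let B := b.toOrthonormalBasis (by rwa [hb])
  have hB : ⇑B = u := by rw [Module.Basis.coe_toOrthonormalBasis, hb]
  have hpars : ∀ z : E4, ‖z‖ ^ 2 = ∑ i, ⟪z, u i⟫ ^ 2 := by
    intro z
    have h := B.sum_inner_mul_inner z z
    rw [← real_inner_self_eq_norm_sq, ← h]
    refine Finset.sum_congr rfl fun i _ => ?_
    rw [hB, real_inner_comm (u i) z, sq]
  -- the isometry
  set U : E4 → E4 := fun z => ∑ i, z i • u i with hU
  have hUnorm : ∀ c : Fin 4 → ℝ, ‖∑ i, c i • u i‖ ^ 2 = ∑ i, c i ^ 2 := by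
    intro c
    rw [← real_inner_self_eq_norm_sq, sum_inner]
    have : ∀ i, ⟪c i • u i, ∑ j, c j • u j⟫ = c i ^ 2 := by
      intro i
      rw [real_inner_smul_left, inner_sum]
      simp_rw [real_inner_smul_right, hite, mul_ite, mul_one, mul_zero]
      rw [Finset.sum_ite_eq Finset.univ i (fun j => c j)]
      simp [sq]
    simp_rw [this]
  have hznorm : ∀ z : E4, ‖z‖ ^ 2 = ∑ i, z i ^ 2 := by
    intro z
    rw [EuclideanSpace.norm_eq, Real.sq_sqrt (by positivity)]
    refine Finset.sum_congr rfl fun i _ => ?_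
    rw [Real.norm_eq_abs, sq_abs]
  have hUiso : ∀ a c : E4, ‖U a - U c‖ = ‖a - c‖ := by
    intro a c
    have h1 : U a - U c = ∑ i, (a i - c i) • u i := by
      rw [hU]
      simp only
      rw [← Finset.sum_sub_distrib]
      refine Finset.sum_congr rfl fun i _ => ?_
      rw [sub_smul]
    have h2 : ‖U a - U c‖ ^ 2 = ‖a - c‖ ^ 2 := by
      rw [h1, hUnorm, hznorm]
      refine Finset.sum_congr rfl fun i _ => ?_
      simp [PiLp.sub_apply]
    have := congrArg Real.sqrt h2
    rwa [Real.sqrt_sq (norm_nonneg _), Real.sqrt_sq (norm_nonneg _)] at this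
  have hC0 : (0:ℝ) ≤ 1076 * d ^ 2 + 2376 * d + 1316 := by nlinarith
  constructor
  · refine ⟨U, fun x _ y _ => hUiso x y, fun x hx => ?_⟩
    -- the approximation bound
    have hxd : ‖x‖ ≤ d := hDd hx
    have hfx : |‖f x‖ - ‖x‖| ≤ ε := by
      have h := hiso x hx 0 h0D
      rwa [hf0, sub_zero, sub_zero] at h
    have hfxn : ‖f x‖ ≤ d + ε := by
      have := (abs_le.mp hfx).2; linarith
    have hkey : ∀ i, |⟪f x, u i⟫ - x i| ≤ (16 * d + 2.2) * ε := by
      intro i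
      have hfxe : |‖f x - v i‖ - ‖x - e i‖| ≤ ε := hiso x hx (e i) (heD i)
      have hxei : ‖x - e i‖ ≤ d + 1 := by
        calc ‖x - e i‖ ≤ ‖x‖ + ‖e i‖ := norm_sub_le _ _
          _ ≤ d + 1 := by rw [hen i]; linarith
      have hxei0 : (0:ℝ) ≤ ‖x - e i‖ := norm_nonneg _
      have hfv0 : (0:ℝ) ≤ ‖f x - v i‖ := norm_nonneg _
      have hA := norm_sub_sq_real (f x) (v i)
      have hBq := norm_sub_sq_real x (e i)
      have hxi : ⟪x, e i⟫ = x i := by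
        simp [he, EuclideanSpace.inner_single_right]
      have h1 : |⟪f x, v i⟫ - x i| ≤ (2 * d + 2 + 1.5 * ε) * ε := by
        rw [← hxi]
        have e1 := abs_le.mp hfx
        have e2 := abs_le.mp (hi0 i)
        have e3 := abs_le.mp hfxe
        have e4 := hvn i
        have hx0 : (0:ℝ) ≤ ‖x‖ := norm_nonneg _
        have hf0' : (0:ℝ) ≤ ‖f x‖ := norm_nonneg _
        rw [abs_le]
        constructor <;> nlinarith [hen i]
      have h2 : |⟪f x, u i - v i⟫| ≤ (d + ε) * (14 * ε) := by
        calc |⟪f x, u i - v i⟫| ≤ ‖f x‖ * ‖u i - v i‖ := abs_real_inner_le_norm _ _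
          _ ≤ (d + ε) * (14 * ε) := by
              refine mul_le_mul hfxn ?_ (norm_nonneg _) (by linarith)
              simpa [norm_sub_rev] using hud i
      have h3 : ⟪f x, u i⟫ - x i = (⟪f x, v i⟫ - x i) + ⟪f x, u i - v i⟫ := by
        rw [inner_sub_right]; ring
      rw [h3]
      calc |(⟪f x, v i⟫ - x i) + ⟪f x, u i - v i⟫|
          ≤ |⟪f x, v i⟫ - x i| + |⟪f x, u i - v i⟫| := abs_add_le _ _
        _ ≤ (16 * d + 2.2) * ε := by nlinarith
    -- Parseval
    have hwu : ∀ i, ⟪f x - U x, u i⟫ = ⟪f x, u i⟫ - x i := by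
      intro i
      rw [inner_sub_left]
      congr 1
      rw [hU]
      simp only
      rw [sum_inner]
      simp_rw [real_inner_smul_left, hite, mul_ite, mul_one, mul_zero]
      simp [Finset.sum_ite_eq']
    have hw2 : ‖f x - U x‖ ^ 2 ≤ (1076 * d ^ 2 + 2376 * d + 1316) * ε ^ 2 := by
      rw [hpars (f x - U x)]
      have hb1 : ∑ i, ⟪f x - U x, u i⟫ ^ 2 ≤ ∑ _i : Fin 4, ((16 * d + 2.2) * ε) ^ 2 := by
        refine Finset.sum_le_sum fun i _ => ?_
        rw [hwu i]
        exact sq_abs (⟪f x, u i⟫ - x i) ▸ pow_le_pow_left₀ (abs_nonneg _) (hkey i) 2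
      have hb2 : ∑ _i : Fin 4, ((16 * d + 2.2) * ε) ^ 2 = 4 * ((16 * d + 2.2) * ε) ^ 2 := by
        simp only [Finset.sum_const, Finset.card_univ, Fintype.card_fin, nsmul_eq_mul]
        norm_num
      have h4 : (4:ℝ) * (16 * d + 2.2) ^ 2 ≤ 1076 * d ^ 2 + 2376 * d + 1316 := by nlinarith
      nlinarith [mul_le_mul_of_nonneg_right h4 (sq_nonneg ε)]
    calc ‖f x - U x‖ = Real.sqrt (‖f x - U x‖ ^ 2) := (Real.sqrt_sq (norm_nonneg _)).symm
      _ ≤ Real.sqrt ((1076 * d ^ 2 + 2376 * d + 1316) * ε ^ 2) := Real.sqrt_le_sqrt hw2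
      _ = Real.sqrt (1076 * d ^ 2 + 2376 * d + 1316) * ε := by
          rw [Real.sqrt_mul hC0, Real.sqrt_sq hε0.le]
  · have h1 : Real.sqrt (1076 * d ^ 2 + 2376 * d + 1316) < 33 * d + 37 := by
      rw [show (33 * d + 37 : ℝ) = Real.sqrt ((33 * d + 37) ^ 2) from
        (Real.sqrt_sq (by nlinarith)).symm]
      exact Real.sqrt_lt_sqrt hC0 (by nlinarith)
    exact mul_lt_mul_of_pos_right h1 hε0
end
end

section
/- Let D be a set with {0, e₁, e₂, e₃, e₄, e₅} ⊆ D ⊆ {x ∈ ℝ⁵ : ‖x‖ ≤ d} for some real d ≥ 1, and let f : D → ℝ⁵ satisfy f(0) = 0 and |‖f(x) − f(y)‖ − ‖x − y‖| ≤ ε for all x, y ∈ D, where 0 < ε < 1/115. Then there exists an isometry U : D → ℝ⁵ such that ‖f(x) − U(x)‖ ≤ √(1976·d² + 4296·d + 2340) · ε < (45·d + 49)·ε for all x ∈ D. -/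
open scoped RealInnerProductSpace

lemma aux_abs_sq {a b c : ℝ} (hb : 0 ≤ b) (h : |a - b| ≤ c) : |a^2 - b^2| ≤ c*(2*b+c) := by
  have h' := abs_le.mp h
  have hc : 0 ≤ c := le_trans (abs_nonneg _) h
  rw [abs_le]
  constructor <;> nlinarith

lemma aux_inner_est {F : Type*} [NormedAddCommGroup F] [InnerProductSpace ℝ F]
    {a b x y : F} {ε : ℝ}
    (h1 : |‖a‖ - ‖x‖| ≤ ε) (h2 : |‖b‖ - ‖y‖| ≤ ε) (h3 : |‖a - b‖ - ‖x - y‖| ≤ ε) :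
    |⟪a, b⟫ - ⟪x, y⟫| ≤ ε * (‖x‖ + ‖y‖ + ‖x - y‖) + 1.5 * ε^2 := by
  have hε : 0 ≤ ε := le_trans (abs_nonneg _) h1
  have e1 := aux_abs_sq (norm_nonneg x) h1
  have e2 := aux_abs_sq (norm_nonneg y) h2
  have e3 := aux_abs_sq (norm_nonneg (x-y)) h3
  have p1 : ‖a - b‖^2 = ‖a‖^2 - 2*⟪a,b⟫ + ‖b‖^2 := norm_sub_sq_real a b
  have p2 : ‖x - y‖^2 = ‖x‖^2 - 2*⟪x,y⟫ + ‖y‖^2 := norm_sub_sq_real x y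
  rw [abs_le] at e1 e2 e3 ⊢
  constructor <;> nlinarith [norm_nonneg x, norm_nonneg y, norm_nonneg (x-y)]

lemma aux_low (ε : ℝ) (hε0 : 0 < ε) (hε1 : ε ≤ 1/115)
    (v : Fin 5 → EuclideanSpace ℝ (Fin 5))
    (hv_norm : ∀ i, |‖v i‖ - 1| ≤ ε)
    (hv_inner : ∀ i j, i ≠ j → |⟪v i, v j⟫| ≤ 3.45*ε)
    (c : Fin 5 → ℝ) :
    (1 - 15.8*ε) * (∑ j, (c j)^2) ≤ ‖∑ j, c j • v j‖^2 := by
  classical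
  set m := ∑ j, |c j| with hm
  set S := ∑ j, (c j)^2 with hS
  have hm0 : 0 ≤ m := Finset.sum_nonneg fun j _ => abs_nonneg _
  have hS0 : 0 ≤ S := Finset.sum_nonneg fun j _ => sq_nonneg _
  have hm2 : m^2 ≤ 5*S := by
    have h := Finset.sum_mul_sq_le_sq_mul_sq Finset.univ (fun _ => (1:ℝ)) (fun j => |c j|)
    simp only [one_mul, one_pow, sq_abs] at h
    simpa [hm, hS, Finset.card_univ] using h
  have expand : ‖∑ j, c j • v j‖^2 = ∑ j, ∑ k, (c j * c k) * ⟪v j, v k⟫ := by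
    rw [← real_inner_self_eq_norm_sq, sum_inner]
    refine Finset.sum_congr rfl fun j _ => ?_
    rw [real_inner_smul_left, inner_sum, Finset.mul_sum]
    refine Finset.sum_congr rfl fun k _ => ?_
    rw [real_inner_smul_right]; ring
  have hsplit : ∀ j, ∑ k, (c j * c k) * ⟪v j, v k⟫
      = (c j)^2 * ‖v j‖^2 + ∑ k ∈ Finset.univ.erase j, (c j * c k) * ⟪v j, v k⟫ := by
    intro j
    rw [← Finset.sum_erase_add _ _ (Finset.mem_univ j), real_inner_self_eq_norm_sq]
    ring
  have hdiag : ∀ j, (1 - 2*ε) * (c j)^2 ≤ (c j)^2 * ‖v j‖^2 := by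
    intro j
    have h := abs_le.mp (hv_norm j)
    have h0 := norm_nonneg (v j)
    have hv2 : 1 - 2*ε ≤ ‖v j‖^2 := by nlinarith [h.1, h.2]
    nlinarith [sq_nonneg (c j), hv2]
  have hoff : ∀ j, |∑ k ∈ Finset.univ.erase j, (c j * c k) * ⟪v j, v k⟫|
      ≤ 3.45*ε * (|c j| * (m - |c j|)) := by
    intro j
    calc |∑ k ∈ Finset.univ.erase j, (c j * c k) * ⟪v j, v k⟫|
        ≤ ∑ k ∈ Finset.univ.erase j, |(c j * c k) * ⟪v j, v k⟫| :=
          Finset.abs_sum_le_sum_abs _ _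
      _ ≤ ∑ k ∈ Finset.univ.erase j, |c j| * |c k| * (3.45*ε) := by
          refine Finset.sum_le_sum fun k hk => ?_
          have hkj : k ≠ j := (Finset.mem_erase.mp hk).1
          rw [abs_mul, abs_mul]
          have := hv_inner j k (Ne.symm hkj)
          have h1 : 0 ≤ |c j| * |c k| := mul_nonneg (abs_nonneg _) (abs_nonneg _)
          exact mul_le_mul_of_nonneg_left this h1
      _ = 3.45*ε * (|c j| * (m - |c j|)) := by
          have heq : ∑ k ∈ Finset.univ.erase j, |c j| * |c k| * (3.45*ε)
              = (3.45*ε*|c j|) * ∑ k ∈ Finset.univ.erase j, |c k| := by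
            rw [Finset.mul_sum]
            exact Finset.sum_congr rfl fun k _ => by ring
          rw [heq, Finset.sum_erase_eq_sub (Finset.mem_univ j), ← hm]
          ring
  have habs : ∑ j, ∑ k, (c j * c k) * ⟪v j, v k⟫
      ≥ (1-2*ε)*S - 3.45*ε*(m^2 - S) := by
    have h1 : ∑ j, ∑ k, (c j * c k) * ⟪v j, v k⟫
        ≥ ∑ j, ((1-2*ε) * (c j)^2 - 3.45*ε * (|c j| * (m - |c j|))) := by
      refine Finset.sum_le_sum fun j _ => ?_
      rw [hsplit j]
      have := (abs_le.mp (hoff j)).1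
      have := hdiag j
      linarith
    have h2 : ∑ j, ((1-2*ε) * (c j)^2 - 3.45*ε * (|c j| * (m - |c j|)))
        = (1-2*ε)*S - 3.45*ε*(m^2 - S) := by
      rw [Finset.sum_sub_distrib, ← Finset.mul_sum, ← hS]
      congr 1
      rw [← Finset.mul_sum]
      congr 1
      have : ∑ j, |c j| * (m - |c j|) = m^2 - S := by
        have : ∀ j, |c j| * (m - |c j|) = |c j| * m - (c j)^2 := by
          intro j; rw [← sq_abs (c j)]; ring
        rw [Finset.sum_congr rfl fun j _ => this j, Finset.sum_sub_distrib, ← Finset.sum_mul, ← hm, ← hS]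
        ring
      rw [this]
    linarith [h1, h2.symm.le]
  rw [expand]
  nlinarith [habs, hm2, hS0, hε0]

lemma aux_num (q m S ε : ℝ) (hε0 : 0 < ε) (hε1 : ε ≤ 1/115) (hq0 : 0 ≤ q)
    (hm0 : 0 ≤ m) (hS0 : 0 ≤ S) (hm2 : m^2 ≤ 5*S) (hq : q^2 ≤ 3.45*ε*m)
    (hlow : (1-15.8*ε)*S ≤ q^2) : q ≤ 8.31*ε := by
  have h8 : (0:ℝ) < 1 - 15.8*ε := by nlinarith
  have hqq : (q^2)^2 ≤ 59.5125 * ε^2 * S := by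
    nlinarith [hq, hm2, hε0.le, hm0, sq_nonneg q, sq_nonneg ε]
  have hq69 : q^2 ≤ 69*ε^2 := by
    rcases (sq_nonneg q).eq_or_lt with hz | hz
    · rw [← hz]; positivity
    · have t1 : (1-15.8*ε) * ((q^2)^2) ≤ (1-15.8*ε) * (59.5125*ε^2*S) :=
        mul_le_mul_of_nonneg_left hqq h8.le
      have t2 : (59.5125*ε^2) * ((1-15.8*ε)*S) ≤ (59.5125*ε^2) * q^2 :=
        mul_le_mul_of_nonneg_left hlow (by positivity)
      have h6 : ((1-15.8*ε)*q^2) * q^2 ≤ (59.5125*ε^2) * q^2 := by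
        ring_nf at t1 t2 ⊢
        linarith
      have h7 : (1-15.8*ε)*q^2 ≤ 59.5125*ε^2 := le_of_mul_le_mul_right h6 hz
      nlinarith [h7, h8, hε1, hε0.le, sq_nonneg ε, mul_nonneg h8.le (sq_nonneg ε)]
  nlinarith [hq0, hε0.le, hq69]

lemma aux_orth (ε : ℝ) (hε0 : 0 < ε) (hε1 : ε ≤ 1/115)
    (v : Fin 5 → EuclideanSpace ℝ (Fin 5))
    (hv_norm : ∀ i, |‖v i‖ - 1| ≤ ε)
    (hv_inner : ∀ i j, i ≠ j → |⟪v i, v j⟫| ≤ 3.45*ε) :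
    ∃ u : Fin 5 → EuclideanSpace ℝ (Fin 5), Orthonormal ℝ u ∧ ∀ i, ‖u i - v i‖ ≤ 17.62*ε := by
  classical
  set K : Fin 5 → Submodule ℝ (EuclideanSpace ℝ (Fin 5)) :=
    fun i => Submodule.span ℝ (Set.range (fun j => if j < i then v j else 0)) with hKdef
  have hvK : ∀ {j i : Fin 5}, j < i → v j ∈ K i := by
    intro j i hji
    refine Submodule.subset_span ⟨j, ?_⟩
    simp [hji]
  have hKmono : ∀ {j i : Fin 5}, j ≤ i → K j ≤ K i := by
    intro j i hji
    refine Submodule.span_le.mpr ?_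
    rintro z ⟨k, rfl⟩
    by_cases hk : k < j
    · simp only [if_pos hk]
      exact hvK (lt_of_lt_of_le hk hji)
    · simp only [if_neg hk]
      exact Submodule.zero_mem _
  set P : Fin 5 → EuclideanSpace ℝ (Fin 5) :=
    fun i => ((K i).orthogonalProjectionOnto (v i) : EuclideanSpace ℝ (Fin 5)) with hPdef
  set w : Fin 5 → EuclideanSpace ℝ (Fin 5) := fun i => v i - P i with hwdef
  have hPK : ∀ i, P i ∈ K i := fun i => SetLike.coe_mem _
  have hwperp : ∀ i, w i ∈ (K i)ᗮ := fun i => Submodule.sub_starProjection_mem_orthogonal (v i)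
  -- bound on the projection
  have hP : ∀ i, ‖P i‖ ≤ 8.31*ε := by
    intro i
    obtain ⟨c0, hc0⟩ := (Submodule.mem_span_range_iff_exists_fun ℝ).mp (hPK i)
    set c : Fin 5 → ℝ := fun j => if j < i then c0 j else 0 with hcdef
    have hrep : ∑ j, c j • v j = P i := by
      rw [← hc0]
      refine Finset.sum_congr rfl fun j _ => ?_
      by_cases h : j < i <;> simp [hcdef, h]
    have hip : ⟪v i, P i⟫ = ‖P i‖^2 := by
      have h0 : ⟪P i, w i⟫ = 0 :=
        (Submodule.mem_orthogonal (K i) (w i)).mp (hwperp i) (P i) (hPK i)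
      rw [hwdef] at h0
      simp only [inner_sub_right] at h0
      have : ⟪P i, v i⟫ = ⟪P i, P i⟫ := by linarith
      rw [real_inner_comm, this, real_inner_self_eq_norm_sq]
    set m := ∑ j, |c j| with hm
    set S := ∑ j, (c j)^2 with hS
    have hm0 : 0 ≤ m := Finset.sum_nonneg fun j _ => abs_nonneg _
    have hS0 : 0 ≤ S := Finset.sum_nonneg fun j _ => sq_nonneg _
    have hm2 : m^2 ≤ 5*S := by
      have h := Finset.sum_mul_sq_le_sq_mul_sq Finset.univ (fun _ => (1:ℝ)) (fun j => |c j|)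
      simp only [one_mul, one_pow, sq_abs] at h
      simpa [hm, hS, Finset.card_univ] using h
    have hIP : |⟪v i, P i⟫| ≤ 3.45*ε * m := by
      rw [← hrep, inner_sum]
      calc |∑ j, ⟪v i, c j • v j⟫| ≤ ∑ j, |⟪v i, c j • v j⟫| := Finset.abs_sum_le_sum_abs _ _
        _ ≤ ∑ j, |c j| * (3.45*ε) := by
            refine Finset.sum_le_sum fun j _ => ?_
            rw [real_inner_smul_right, abs_mul]
            by_cases h : j < i
            · have hne : i ≠ j := fun h' => absurd h (h' ▸ lt_irrefl i)
              exact mul_le_mul_of_nonneg_left (hv_inner i j hne) (abs_nonneg _)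
            · simp [hcdef, h]
        _ = 3.45*ε*m := by rw [← Finset.sum_mul, ← hm]; ring
    have hlow := aux_low ε hε0 hε1 v hv_norm hv_inner c
    rw [hrep, ← hS] at hlow
    -- ‖P i‖^2 ≤ 3.45 ε m,  m² ≤ 5 S, (1-15.8 ε) S ≤ ‖P i‖²
    have hq : ‖P i‖^2 ≤ 3.45*ε*m := by rw [← hip]; exact le_trans (le_abs_self _) hIP
    exact aux_num ‖P i‖ m S ε hε0 hε1 (norm_nonneg _) hm0 hS0 hm2 hq hlow
  -- norms of w
  have hw1 : ∀ i, |‖w i‖ - 1| ≤ 9.31*ε := by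
    intro i
    have h1 : |‖w i‖ - ‖v i‖| ≤ ‖P i‖ := by
      have hwv : w i - v i = -(P i) := by simp only [hwdef]; abel
      have h := abs_norm_sub_norm_le (w i) (v i)
      rw [hwv, norm_neg] at h
      exact h
    have h2 := abs_le.mp (hv_norm i)
    have h3 := abs_le.mp h1
    have h4 := hP i
    rw [abs_le]
    constructor <;> nlinarith
  have hwpos : ∀ i, 0 < ‖w i‖ := by
    intro i
    have := abs_le.mp (hw1 i)
    nlinarith
  set u : Fin 5 → EuclideanSpace ℝ (Fin 5) := fun i => (‖w i‖)⁻¹ • w i with hudef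
  have hu_unit : ∀ i, ‖u i‖ = 1 := by
    intro i
    rw [hudef]
    simp only [norm_smul, norm_inv, norm_norm]
    exact inv_mul_cancel₀ (ne_of_gt (hwpos i))
  have hww : ∀ i j, i ≠ j → ⟪w i, w j⟫ = 0 := by
    have key : ∀ i j, j < i → ⟪w j, w i⟫ = 0 := by
      intro i j hji
      have hwKi : w j ∈ K i := by
        rw [hwdef]
        exact Submodule.sub_mem _ (hvK hji) (hKmono hji.le (hPK j))
      exact (Submodule.mem_orthogonal (K i) (w i)).mp (hwperp i) (w j) hwKi
    intro i j hij
    rcases lt_or_gt_of_ne hij with h | h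
    · exact key j i h
    · rw [real_inner_comm]; exact key i j h
  have hu_orth : Orthonormal ℝ u := by
    rw [orthonormal_iff_ite]
    intro i j
    by_cases h : i = j
    · subst h
      rw [real_inner_self_eq_norm_sq, hu_unit i]
      norm_num
    · simp only [if_neg h]
      rw [hudef]
      simp only [real_inner_smul_left, real_inner_smul_right]
      rw [hww i j h]
      ring
  refine ⟨u, hu_orth, fun i => ?_⟩
  have h1 : ‖u i - w i‖ = |1 - ‖w i‖| := by
    have : u i - w i = ((‖w i‖)⁻¹ - 1) • w i := by
      rw [hudef]; rw [sub_smul, one_smul]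
    have hne : ‖w i‖ ≠ 0 := ne_of_gt (hwpos i)
    rw [this, norm_smul, Real.norm_eq_abs]
    rw [show |‖w i‖⁻¹ - 1| * ‖w i‖ = |(‖w i‖⁻¹ - 1) * ‖w i‖| by rw [abs_mul, abs_of_pos (hwpos i)]]
    rw [sub_mul, inv_mul_cancel₀ hne, one_mul]
  have h2 : ‖w i - v i‖ ≤ 8.31*ε := by
    have : w i - v i = -(P i) := by simp only [hwdef]; abel
    rw [this, norm_neg]
    exact hP i
  have h3 : |1 - ‖w i‖| ≤ 9.31*ε := by
    have := abs_le.mp (hw1 i)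
    rw [abs_le]
    constructor <;> linarith
  calc ‖u i - v i‖ ≤ ‖u i - w i‖ + ‖w i - v i‖ := by
        have := norm_sub_le_norm_sub_add_norm_sub (u i) (w i) (v i)
        exact this
    _ ≤ 9.31*ε + 8.31*ε := by rw [h1]; exact add_le_add h3 h2
    _ = 17.62*ε := by ring

lemma aux_coord (d ε : ℝ) (hd : 1 ≤ d) (hε0 : 0 < ε) (hε1 : ε ≤ 1/115) :
    (d + ε) * (17.62*ε) + (ε*(2*d + 2) + 1.5*ε^2) ≤ (19.62*d + 2.17)*ε := by nlinarith

lemma aux_final (d ε : ℝ) (hd : 1 ≤ d) (hε0 : 0 ≤ ε) :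
    5 * ((19.62*d + 2.17)*ε)^2 ≤ (1976*d^2 + 4296*d + 2340)*ε^2 := by
  have h : 5*(19.62*d+2.17)^2 ≤ 1976*d^2+4296*d+2340 := by nlinarith
  calc 5 * ((19.62*d + 2.17)*ε)^2 = (5*(19.62*d+2.17)^2) * ε^2 := by ring
    _ ≤ (1976*d^2+4296*d+2340) * ε^2 := mul_le_mul_of_nonneg_right h (sq_nonneg ε)

/-- Example 5.4: stability of isometries on bounded subsets of `ℝ⁵`. -/
theorem stability_dim_five (d : ℝ) (hd : 1 ≤ d) (ε : ℝ) (hε0 : 0 < ε) (hε : ε < 1 / 115)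
    (D : Set (EuclideanSpace ℝ (Fin 5)))
    (h0D : (0 : EuclideanSpace ℝ (Fin 5)) ∈ D)
    (heD : ∀ i : Fin 5, EuclideanSpace.single i (1 : ℝ) ∈ D)
    (hDd : D ⊆ {x : EuclideanSpace ℝ (Fin 5) | ‖x‖ ≤ d})
    (f : EuclideanSpace ℝ (Fin 5) → EuclideanSpace ℝ (Fin 5))
    (hf0 : f 0 = 0)
    (hiso : ∀ x ∈ D, ∀ y ∈ D, |‖f x - f y‖ - ‖x - y‖| ≤ ε) :
    (∃ U : EuclideanSpace ℝ (Fin 5) → EuclideanSpace ℝ (Fin 5),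
      (∀ x ∈ D, ∀ y ∈ D, ‖U x - U y‖ = ‖x - y‖) ∧
      ∀ x ∈ D, ‖f x - U x‖ ≤ Real.sqrt (1976 * d ^ 2 + 4296 * d + 2340) * ε) ∧
    Real.sqrt (1976 * d ^ 2 + 4296 * d + 2340) * ε < (45 * d + 49) * ε := by
  classical
  have hε1 : ε ≤ 1/115 := hε.le
  set e : Fin 5 → EuclideanSpace ℝ (Fin 5) := fun i => EuclideanSpace.single i (1:ℝ) with hedef
  set v : Fin 5 → EuclideanSpace ℝ (Fin 5) := fun i => f (e i) with hvdef
  have he_norm : ∀ i, ‖e i‖ = 1 := by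
    intro i
    rw [hedef]
    simp [EuclideanSpace.norm_single]
  have he_inner : ∀ i j, i ≠ j → ⟪e i, e j⟫ = 0 := by
    intro i j hij
    rw [hedef]
    simp only
    rw [EuclideanSpace.inner_single_right]
    simp only [EuclideanSpace.single_apply, map_one, one_mul]
    rw [if_neg (fun h => hij h.symm)]
    simp
  have he_sub : ∀ i j, i ≠ j → ‖e i - e j‖ ≤ 1.41422 := by
    intro i j hij
    have hsq : ‖e i - e j‖^2 = 2 := by
      rw [norm_sub_sq_real, he_norm i, he_norm j, he_inner i j hij]
      norm_num
    nlinarith [norm_nonneg (e i - e j)]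
  -- basic estimates on f
  have hfn : ∀ x ∈ D, |‖f x‖ - ‖x‖| ≤ ε := by
    intro x hx
    have := hiso x hx 0 h0D
    rwa [hf0, sub_zero, sub_zero] at this
  have hinner : ∀ x ∈ D, ∀ y ∈ D, |⟪f x, f y⟫ - ⟪x, y⟫| ≤ ε * (‖x‖ + ‖y‖ + ‖x - y‖) + 1.5 * ε^2 :=
    fun x hx y hy => aux_inner_est (hfn x hx) (hfn y hy) (hiso x hx y hy)
  have hv_norm : ∀ i, |‖v i‖ - 1| ≤ ε := by
    intro i
    have := hfn (e i) (heD i)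
    rwa [he_norm i] at this
  have hv_inner : ∀ i j, i ≠ j → |⟪v i, v j⟫| ≤ 3.45*ε := by
    intro i j hij
    have h := hinner (e i) (heD i) (e j) (heD j)
    rw [he_inner i j hij, sub_zero, he_norm i, he_norm j] at h
    have h2 := he_sub i j hij
    calc |⟪v i, v j⟫| ≤ ε * (1 + 1 + ‖e i - e j‖) + 1.5 * ε^2 := h
      _ ≤ 3.45*ε := by nlinarith
  obtain ⟨u, hu_orth, hu_close⟩ := aux_orth ε hε0 hε1 v hv_norm hv_inner
  -- u is an orthonormal basis
  have hspan : ⊤ ≤ Submodule.span ℝ (Set.range u) := by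
    refine (hu_orth.linearIndependent.span_eq_top_of_card_eq_finrank ?_).ge
    simp [finrank_euclideanSpace_fin]
  set b : OrthonormalBasis (Fin 5) ℝ (EuclideanSpace ℝ (Fin 5)) :=
    OrthonormalBasis.mk hu_orth hspan with hbdef
  have hexp : ∀ z : EuclideanSpace ℝ (Fin 5), ∑ i, ⟪u i, z⟫ • u i = z := by
    intro z
    have h := b.sum_repr z
    have hb : ∀ i, b i = u i := fun i => congrFun (OrthonormalBasis.coe_mk hu_orth hspan) i
    have hr : ∀ i, b.repr z i = ⟪u i, z⟫ := by
      intro i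
      rw [← hb i]
      exact b.repr_apply_apply z i
    calc ∑ i, ⟪u i, z⟫ • u i = ∑ i, b.repr z i • b i := by
          refine Finset.sum_congr rfl fun i _ => ?_
          rw [hr i, hb i]
      _ = z := h
  have hosum : ∀ c : Fin 5 → ℝ, ‖∑ i, c i • u i‖^2 = ∑ i, (c i)^2 := by
    intro c
    rw [← real_inner_self_eq_norm_sq, hu_orth.inner_sum c c Finset.univ]
    refine Finset.sum_congr rfl fun i _ => ?_
    simp [sq]
  have hcoordn : ∀ z : EuclideanSpace ℝ (Fin 5), ‖z‖^2 = ∑ i, (z i)^2 := by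
    intro z
    rw [EuclideanSpace.norm_eq, Real.sq_sqrt (Finset.sum_nonneg fun i _ => sq_nonneg _)]
    exact Finset.sum_congr rfl fun i _ => by rw [Real.norm_eq_abs, sq_abs]
  refine ⟨⟨fun x => ∑ i, x i • u i, ?_, ?_⟩, ?_⟩
  · -- isometry
    intro x hx y hy
    have h1 : (∑ i, x i • u i) - (∑ i, y i • u i) = ∑ i, (x i - y i) • u i := by
      rw [← Finset.sum_sub_distrib]
      exact Finset.sum_congr rfl fun i _ => (sub_smul _ _ _).symm
    have h2 : ‖(∑ i, x i • u i) - (∑ i, y i • u i)‖^2 = ‖x - y‖^2 := by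
      rw [h1, hosum, hcoordn (x - y)]
      exact Finset.sum_congr rfl fun i _ => by simp [PiLp.sub_apply]
    have h3 := congrArg Real.sqrt h2
    rwa [Real.sqrt_sq (norm_nonneg _), Real.sqrt_sq (norm_nonneg _)] at h3
  · -- approximation bound
    intro x hx
    have hxd : ‖x‖ ≤ d := hDd hx
    have hfxd : ‖f x‖ ≤ d + ε := by
      have := abs_le.mp (hfn x hx)
      linarith [this.2]
    have hcoord : ∀ i, |⟪u i, f x⟫ - x i| ≤ (19.62*d + 2.17)*ε := by
      intro i
      have hxe : ‖x - e i‖ ≤ d + 1 := by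
        calc ‖x - e i‖ ≤ ‖x‖ + ‖e i‖ := norm_sub_le _ _
          _ ≤ d + 1 := by rw [he_norm i]; linarith
      have hest := hinner x hx (e i) (heD i)
      have hxi : ⟪x, e i⟫ = x i := by
        rw [hedef]
        simp only
        rw [EuclideanSpace.inner_single_right]
        simp
      rw [hxi, he_norm i] at hest
      have h1 : |⟪f x, v i⟫ - x i| ≤ ε*(2*d + 2) + 1.5*ε^2 := by
        have : ε * (‖x‖ + 1 + ‖x - e i‖) + 1.5 * ε^2 ≤ ε*(2*d+2) + 1.5*ε^2 := by nlinarith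
        exact le_trans hest this
      have h2 : |⟪u i - v i, f x⟫| ≤ (d + ε) * (17.62*ε) := by
        calc |⟪u i - v i, f x⟫| ≤ ‖u i - v i‖ * ‖f x‖ := abs_real_inner_le_norm _ _
          _ ≤ (17.62*ε) * (d + ε) := by
              refine mul_le_mul (hu_close i) hfxd (norm_nonneg _) (by positivity)
          _ = (d + ε) * (17.62*ε) := by ring
      have h3 : ⟪u i, f x⟫ - x i = ⟪u i - v i, f x⟫ + (⟪f x, v i⟫ - x i) := by
        rw [inner_sub_left, real_inner_comm (v i) (f x)]
        ring
      rw [h3]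
      calc |⟪u i - v i, f x⟫ + (⟪f x, v i⟫ - x i)|
          ≤ |⟪u i - v i, f x⟫| + |⟪f x, v i⟫ - x i| := abs_add_le _ _
        _ ≤ (d + ε) * (17.62*ε) + (ε*(2*d + 2) + 1.5*ε^2) := add_le_add h2 h1
        _ ≤ (19.62*d + 2.17)*ε := aux_coord d ε hd hε0 hε1
    have hsum : f x - (∑ i, x i • u i) = ∑ i, (⟪u i, f x⟫ - x i) • u i := by
      conv_lhs => rw [← hexp (f x)]
      rw [← Finset.sum_sub_distrib]
      exact Finset.sum_congr rfl fun i _ => (sub_smul _ _ _).symm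
    have hns : ‖f x - (∑ i, x i • u i)‖^2 ≤ (1976*d^2 + 4296*d + 2340)*ε^2 := by
      rw [hsum, hosum]
      have hterm : ∀ i : Fin 5, (⟪u i, f x⟫ - x i)^2 ≤ ((19.62*d + 2.17)*ε)^2 := by
        intro i
        have h := abs_le.mp (hcoord i)
        exact sq_le_sq' h.1 h.2
      calc ∑ i, (⟪u i, f x⟫ - x i)^2 ≤ ∑ _i : Fin 5, ((19.62*d + 2.17)*ε)^2 :=
            Finset.sum_le_sum fun i _ => hterm i
        _ = 5 * ((19.62*d + 2.17)*ε)^2 := by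
            rw [Finset.sum_const, Finset.card_univ]
            simp [nsmul_eq_mul]
        _ ≤ (1976*d^2 + 4296*d + 2340)*ε^2 := aux_final d ε hd hε0.le
    have hP0 : (0:ℝ) ≤ 1976*d^2 + 4296*d + 2340 := by nlinarith
    calc ‖f x - (∑ i, x i • u i)‖
        = Real.sqrt (‖f x - (∑ i, x i • u i)‖^2) := (Real.sqrt_sq (norm_nonneg _)).symm
      _ ≤ Real.sqrt ((1976*d^2 + 4296*d + 2340)*ε^2) := Real.sqrt_le_sqrt hns
      _ = Real.sqrt (1976*d^2 + 4296*d + 2340) * ε := by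
          rw [Real.sqrt_mul hP0, Real.sqrt_sq hε0.le]
  · -- strict inequality
    have h1 : (0:ℝ) < 45*d + 49 := by nlinarith
    have h2 : Real.sqrt (1976*d^2 + 4296*d + 2340) < 45*d + 49 :=
      (Real.sqrt_lt' h1).mpr (by nlinarith)
    exact mul_lt_mul_of_pos_right h2 hε0
end

section
/- Let n ≥ 2 be an integer and 0 < ε < 1/12. Let f be a function defined on a subset of ℝⁿ containing {0, e₁, e₂} with f(0) = 0, satisfying |‖f(x) − f(y)‖ − ‖x − y‖| ≤ ε for all x, y ∈ {0, e₁, e₂}, and suppose f(e₁) = (e′₁₁, 0, …, 0) and f(e₂) = (e′₂₁, e′₂₂, 0, …, 0) with e′₁₁ ≥ 0 and e′₂₂ ≥ 0. Then (−(4 + 2√2)·ε + ε²)/(2(1 − ε)) ≤ e′₂₁ ≤ ((4 + 2√2)·ε + ε²)/(2(1 − ε)); in particular |e′₂₁| ≤ 4·ε. -/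
set_option maxHeartbeats 2000000

lemma real_aux_b21 (ε a b c s : ℝ) (hε0 : 0 < ε) (hε : ε < 1/12)
    (hsl : 1 ≤ s) (hsu : s ≤ 3/2) (ha0 : 0 ≤ a)
    (F1l : (1-ε)^2 ≤ a^2) (F1u : a^2 ≤ (1+ε)^2)
    (F2l : (1-ε)^2 ≤ b^2+c^2) (F2u : b^2+c^2 ≤ (1+ε)^2)
    (F3l : 2 - 2*s*ε + ε^2 ≤ (a-b)^2+c^2) (F3u : (a-b)^2+c^2 ≤ 2 + 2*s*ε + ε^2) :
    ((-(4 + 2*s) * ε + ε^2) / (2*(1-ε)) ≤ b ∧ b ≤ ((4 + 2*s) * ε + ε^2) / (2*(1-ε)))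
      ∧ |b| ≤ 4 * ε := by
  have hal : 1 - ε ≤ a := by nlinarith [sq_nonneg (a - (1-ε))]
  have hau : a ≤ 1 + ε := by nlinarith [sq_nonneg (a - (1+ε))]
  have hden : (0:ℝ) < 2*(1-ε) := by linarith
  have hub2 : 2*a*b ≤ (4 + 2*s)*ε + ε^2 := by nlinarith
  have hlb2 : -(4 + 2*s)*ε + ε^2 ≤ 2*a*b := by nlinarith
  have hbu : b ≤ ((4 + 2*s) * ε + ε^2) / (2*(1-ε)) := by
    rw [le_div_iff₀ hden]
    rcases le_or_gt 0 b with hb | hb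
    · nlinarith [mul_nonneg hb (by linarith : (0:ℝ) ≤ a - (1-ε))]
    · nlinarith [mul_nonneg hε0.le (by linarith : (0:ℝ) ≤ 2*s),
        mul_nonpos_of_nonpos_of_nonneg hb.le hden.le]
  have hbl : (-(4 + 2*s) * ε + ε^2) / (2*(1-ε)) ≤ b := by
    rw [div_le_iff₀ hden]
    rcases le_or_gt 0 b with hb | hb
    · nlinarith [mul_nonneg hε0.le (by linarith : (0:ℝ) ≤ 2*s),
        mul_nonneg hb hden.le]
    · nlinarith [mul_nonpos_of_nonpos_of_nonneg hb.le (by linarith : (0:ℝ) ≤ a - (1-ε))]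
  refine ⟨⟨hbl, hbu⟩, abs_le.2 ⟨?_, ?_⟩⟩
  · refine le_trans ?_ hbl
    rw [le_div_iff₀ hden]; nlinarith [mul_nonneg (by linarith : (0:ℝ) ≤ 3/2 - s) hε0.le, mul_nonneg hε0.le (by linarith : (0:ℝ) ≤ 1/12 - ε)]
  · refine le_trans hbu ?_
    rw [div_le_iff₀ hden]; nlinarith [mul_nonneg (by linarith : (0:ℝ) ≤ 3/2 - s) hε0.le, mul_nonneg hε0.le (by linarith : (0:ℝ) ≤ 1/12 - ε)]

/-- If `f 0 = 0`, `f` is an `ε`-isometry on `{0, e₁, e₂}` (`0 < ε < 1/12`) with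
`f e₁ = (e′₁₁, 0, …, 0)`, `f e₂ = (e′₂₁, e′₂₂, 0, …, 0)`, `e′₁₁, e′₂₂ ≥ 0`, then
`(−(4 + 2√2)ε + ε²)/(2(1−ε)) ≤ e′₂₁ ≤ ((4 + 2√2)ε + ε²)/(2(1−ε))`;
in particular `|e′₂₁| ≤ 4ε`. -/
theorem subdiagonal_bound_two_one (n : ℕ) (hn : 2 ≤ n) (ε : ℝ)
    (hε0 : 0 < ε) (hε : ε < 1 / 12)
    (f : EuclideanSpace ℝ (Fin n) → EuclideanSpace ℝ (Fin n))
    (hf0 : f 0 = 0)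
    (hiso : ∀ x ∈ ({0, EuclideanSpace.single ⟨0, by omega⟩ (1 : ℝ),
              EuclideanSpace.single ⟨1, by omega⟩ (1 : ℝ)} :
              Set (EuclideanSpace ℝ (Fin n))),
            ∀ y ∈ ({0, EuclideanSpace.single ⟨0, by omega⟩ (1 : ℝ),
              EuclideanSpace.single ⟨1, by omega⟩ (1 : ℝ)} :
              Set (EuclideanSpace ℝ (Fin n))),
            |‖f x - f y‖ - ‖x - y‖| ≤ ε)
    (htri1 : ∀ j : Fin n, j ≠ ⟨0, by omega⟩ →
      f (EuclideanSpace.single ⟨0, by omega⟩ (1 : ℝ)) j = 0)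
    (htri2 : ∀ j : Fin n, j ≠ ⟨0, by omega⟩ → j ≠ ⟨1, by omega⟩ →
      f (EuclideanSpace.single ⟨1, by omega⟩ (1 : ℝ)) j = 0)
    (hpos1 : 0 ≤ f (EuclideanSpace.single ⟨0, by omega⟩ (1 : ℝ)) ⟨0, by omega⟩)
    (hpos2 : 0 ≤ f (EuclideanSpace.single ⟨1, by omega⟩ (1 : ℝ)) ⟨1, by omega⟩) :
    ((-(4 + 2 * Real.sqrt 2) * ε + ε ^ 2) / (2 * (1 - ε)) ≤
        f (EuclideanSpace.single ⟨1, by omega⟩ (1 : ℝ)) ⟨0, by omega⟩ ∧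
      f (EuclideanSpace.single ⟨1, by omega⟩ (1 : ℝ)) ⟨0, by omega⟩ ≤
        ((4 + 2 * Real.sqrt 2) * ε + ε ^ 2) / (2 * (1 - ε))) ∧
    |f (EuclideanSpace.single ⟨1, by omega⟩ (1 : ℝ)) ⟨0, by omega⟩| ≤ 4 * ε := by
  have h0n : 0 < n := by omega
  have h1n : 1 < n := by omega
  set i0 : Fin n := ⟨0, h0n⟩ with hi0def
  set i1 : Fin n := ⟨1, h1n⟩ with hi1def
  have hne : i0 ≠ i1 := by simp [hi0def, hi1def, Fin.ext_iff]
  set e1 : EuclideanSpace ℝ (Fin n) := EuclideanSpace.single i0 (1:ℝ) with he1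
  set e2 : EuclideanSpace ℝ (Fin n) := EuclideanSpace.single i1 (1:ℝ) with he2
  -- norm-squared of vectors supported on {i0, i1}
  have key : ∀ x : EuclideanSpace ℝ (Fin n),
      (∀ j : Fin n, j ≠ i0 → j ≠ i1 → x j = 0) →
      ‖x‖ ^ 2 = (x i0) ^ 2 + (x i1) ^ 2 := by
    intro x hx
    rw [EuclideanSpace.norm_eq, Real.sq_sqrt (Finset.sum_nonneg fun i _ => sq_nonneg _)]
    rw [← Finset.sum_subset (Finset.subset_univ ({i0, i1} : Finset (Fin n)))
        (fun j _ hj => ?_)]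
    · rw [Finset.sum_pair hne]; simp [sq_abs]
    · simp only [Finset.mem_insert, Finset.mem_singleton, not_or] at hj
      simp [hx j hj.1 hj.2, sq_abs]
  set a := f e1 i0
  set b := f e2 i0
  set c := f e2 i1
  have hu2 : ‖f e1‖ ^ 2 = a ^ 2 := by
    have := key (f e1) (fun j hj0 _ => htri1 j hj0)
    rw [htri1 i1 hne.symm] at this
    simpa using this
  have hv2 : ‖f e2‖ ^ 2 = b ^ 2 + c ^ 2 := key (f e2) htri2
  have hd2 : ‖f e1 - f e2‖ ^ 2 = (a - b) ^ 2 + c ^ 2 := by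
    have := key (f e1 - f e2) (fun j hj0 hj1 => by
      simp [PiLp.sub_apply, htri1 j hj0, htri2 j hj0 hj1])
    simpa [PiLp.sub_apply, htri1 i1 hne.symm, sub_sub_eq_add_sub] using this
  -- memberships
  have m0 : (0 : EuclideanSpace ℝ (Fin n)) ∈
      ({0, e1, e2} : Set (EuclideanSpace ℝ (Fin n))) := Set.mem_insert _ _
  have m1 : e1 ∈ ({0, e1, e2} : Set (EuclideanSpace ℝ (Fin n))) := by
    exact Set.mem_insert_iff.2 (Or.inr (Set.mem_insert _ _))
  have m2 : e2 ∈ ({0, e1, e2} : Set (EuclideanSpace ℝ (Fin n))) := by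
    simp
  -- the three isometry estimates
  have hA := hiso e1 m1 0 m0
  have hB := hiso e2 m2 0 m0
  have hC := hiso e1 m1 e2 m2
  rw [hf0, sub_zero, sub_zero] at hA hB
  have hne1 : ‖e1‖ = 1 := by simp [he1, EuclideanSpace.norm_single]
  have hne2 : ‖e2‖ = 1 := by simp [he2, EuclideanSpace.norm_single]
  have hne12 : ‖e1 - e2‖ = Real.sqrt 2 := by
    have h2 : ‖e1 - e2‖ ^ 2 = 2 := by
      have := key (e1 - e2) (fun j hj0 hj1 => by
        simp [PiLp.sub_apply, he1, he2, EuclideanSpace.single_apply, hj0, hj1])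
      rw [this]
      simp [PiLp.sub_apply, he1, he2, EuclideanSpace.single_apply, hne, hne.symm]
      norm_num
    rw [← Real.sqrt_sq (norm_nonneg (e1 - e2)), h2]
  rw [hne1] at hA
  rw [hne2] at hB
  rw [hne12] at hC
  have s := Real.sqrt 2
  have hs2 : Real.sqrt 2 ^ 2 = 2 := Real.sq_sqrt (by norm_num)
  have hs0 : (0:ℝ) ≤ Real.sqrt 2 := Real.sqrt_nonneg 2
  have hsl : 1 ≤ Real.sqrt 2 := by nlinarith
  have hsu : Real.sqrt 2 ≤ 3/2 := by nlinarith
  rw [abs_le] at hA hB hC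
  have hnn1 := norm_nonneg (f e1)
  have hnn2 := norm_nonneg (f e2)
  have hnn3 := norm_nonneg (f e1 - f e2)
  have F1l : (1-ε)^2 ≤ a^2 := by nlinarith [hA.1, hA.2]
  have F1u : a^2 ≤ (1+ε)^2 := by nlinarith [hA.1, hA.2]
  have F2l : (1-ε)^2 ≤ b^2 + c^2 := by nlinarith [hB.1, hB.2]
  have F2u : b^2 + c^2 ≤ (1+ε)^2 := by nlinarith [hB.1, hB.2]
  have F3l : 2 - 2*Real.sqrt 2*ε + ε^2 ≤ (a-b)^2 + c^2 := by nlinarith [hC.1, hC.2]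
  have F3u : (a-b)^2 + c^2 ≤ 2 + 2*Real.sqrt 2*ε + ε^2 := by nlinarith [hC.1, hC.2]
  exact real_aux_b21 ε a b c (Real.sqrt 2) hε0 (by linarith) hsl hsu hpos1
    F1l F1u F2l F2u F3l F3u
end
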